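/- arXiv:2603.17595 — 8 statements merged into one kernel-verified Lean document; each statement's English description precedes it below -/
import Mathlib

section
/- Let M be an n×n real symmetric matrix and let a, b, c be indices with b ≠ c. If there exists a permutation matrix P commuting with M such that P e_b = e_b and P e_a ≠ e_a, then there is no pretty good state transfer between e_a and the plus state (e_b+e_c)/√2; that is, there is no sequence of real numbers t_k and no γ ∈ ℂ with |γ| = 1 such that exp(i t_k M) e_a → γ (e_b + e_c)/√2 as k → ∞. -/
open Matrix Filter

/-- Transition matrix `U(t) = exp(itM)` of a real symmetric matrix `M`, acting on `ℂ^ι`. -/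
noncomputable def transU {ι : Type*} [Fintype ι] [DecidableEq ι]
    (M : Matrix ι ι ℝ) (t : ℝ) : Matrix ι ι ℂ :=
  NormedSpace.exp ((Complex.I * (t : ℂ)) • M.map Complex.ofReal)

/-- Transition matrix `exp(itM)` of a complex matrix `M`. -/
noncomputable def transUC {ι : Type*} [Fintype ι] [DecidableEq ι]
    (M : Matrix ι ι ℂ) (t : ℝ) : Matrix ι ι ℂ :=
  NormedSpace.exp ((Complex.I * (t : ℂ)) • M)

/-- Real standard basis vector `e_a`. -/
def eVecR {ι : Type*} [DecidableEq ι] (a : ι) : ι → ℝ := fun j => if j = a then 1 else 0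

/-- Complex standard basis vector `e_a`. -/
def eVec {ι : Type*} [DecidableEq ι] (a : ι) : ι → ℂ := fun j => if j = a then 1 else 0

/-- Coercion of a real vector to a complex vector. -/
def cVec {ι : Type*} (u : ι → ℝ) : ι → ℂ := fun j => (u j : ℂ)

/-- The plus state `(e_a + e_b)/√2`. -/
noncomputable def plusState {ι : Type*} [DecidableEq ι] (a b : ι) : ι → ℂ :=
  ((Real.sqrt 2 : ℂ))⁻¹ • (eVec a + eVec b)

/-- The pair state `(e_a − e_b)/√2`. -/
noncomputable def pairState {ι : Type*} [DecidableEq ι] (a b : ι) : ι → ℂ :=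
  ((Real.sqrt 2 : ℂ))⁻¹ • (eVec a - eVec b)

/-- Pretty good state transfer from `u` to `v` relative to `M`:
there are a sequence of times `t k` and a unimodular `γ` with `U(t k) u → γ v`. -/
def PGST {ι : Type*} [Fintype ι] [DecidableEq ι]
    (M : Matrix ι ι ℝ) (u v : ι → ℂ) : Prop :=
  ∃ (t : ℕ → ℝ) (γ : ℂ), ‖γ‖ = 1 ∧
    Tendsto (fun k => (transU M (t k)).mulVec u) atTop (nhds (γ • v))

/-- The permutation matrix of `σ`, satisfying `permMat σ *ᵥ e_a = e_{σ a}`. -/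
def permMat {ι : Type*} [DecidableEq ι] (σ : Equiv.Perm ι) : Matrix ι ι ℝ :=
  Matrix.of fun i j => if σ j = i then 1 else 0

/-- Adjacency matrix of the circulant graph `Cay(ℤ/n, S)`. -/
noncomputable def cayA (n : ℕ) (S : Finset (ZMod n)) : Matrix (ZMod n) (ZMod n) ℝ :=
  Matrix.of fun a b => if a - b ∈ S then 1 else 0

/-- Adjacency matrix of the cycle `C_n` on `ℤ/n`. -/
noncomputable def cycA (n : ℕ) : Matrix (ZMod n) (ZMod n) ℝ :=
  Matrix.of fun a b => if a - b = 1 ∨ b - a = 1 then 1 else 0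

/-- Adjacency matrix `J − I − A(C_n)` of the complement of the cycle `C_n`. -/
noncomputable def cycAbar (n : ℕ) : Matrix (ZMod n) (ZMod n) ℝ :=
  Matrix.of (fun _ _ => (1 : ℝ)) - 1 - cycA n


section Aux

open NormedSpace

variable {n : ℕ}

lemma permMat_mulVec_eVecR (σ : Equiv.Perm (Fin n)) (x : Fin n) :
    permMat σ *ᵥ eVecR x = eVecR (σ x) := by
  ext i
  simp only [permMat, eVecR, Matrix.mulVec, dotProduct, Matrix.of_apply,
    mul_ite, mul_one, mul_zero, ite_and]
  rw [Finset.sum_ite_eq' Finset.univ x (fun j => if σ j = i then (1:ℝ) else 0)]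
  simp [eq_comm]

lemma permMatC_mulVec_eVec (σ : Equiv.Perm (Fin n)) (x : Fin n) :
    (permMat σ).map Complex.ofReal *ᵥ eVec x = eVec (σ x) := by
  ext i
  simp only [permMat, eVec, Matrix.mulVec, dotProduct, Matrix.map_apply, Matrix.of_apply,
    apply_ite Complex.ofReal, Complex.ofReal_one, Complex.ofReal_zero,
    mul_ite, mul_one, mul_zero, ite_and]
  rw [Finset.sum_ite_eq' Finset.univ x (fun j => if σ j = i then (1:ℂ) else 0)]
  simp [eq_comm]

lemma eVecR_inj {x y : Fin n} (h : eVecR (ι := Fin n) x = eVecR y) : x = y := by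
  by_contra hxy
  have := congrFun h x
  simp only [eVecR] at this
  rw [if_pos trivial, if_neg hxy] at this
  exact one_ne_zero this
  
lemma star_eVec (x : Fin n) : star (eVec (ι := Fin n) x) = eVec x := by
  ext i
  simp [eVec, apply_ite (star : ℂ → ℂ)]

lemma eVec_dot (x y : Fin n) : eVec (ι := Fin n) x ⬝ᵥ eVec y = if x = y then 1 else 0 := by
  simp [eVec, dotProduct, ite_mul, Finset.sum_ite_eq', eq_comm]

lemma tendsto_star_dot {f g : ℕ → (Fin n → ℂ)} {u v : Fin n → ℂ}
    (hf : Tendsto f atTop (nhds u)) (hg : Tendsto g atTop (nhds v)) :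
    Tendsto (fun k => star (f k) ⬝ᵥ g k) atTop (nhds (star u ⬝ᵥ v)) := by
  simp only [dotProduct, Pi.star_apply]
  exact tendsto_finset_sum _ fun i _ =>
    ((tendsto_pi_nhds.mp hf i).star).mul (tendsto_pi_nhds.mp hg i)

lemma tendsto_mulVec (A : Matrix (Fin n) (Fin n) ℂ) {f : ℕ → Fin n → ℂ} {u : Fin n → ℂ}
    (hf : Tendsto f atTop (nhds u)) :
    Tendsto (fun k => A *ᵥ f k) atTop (nhds (A *ᵥ u)) := by
  rw [tendsto_pi_nhds]
  intro i
  simp only [Matrix.mulVec, dotProduct]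
  exact tendsto_finset_sum _ fun j _ => tendsto_const_nhds.mul (tendsto_pi_nhds.mp hf j)

lemma transU_unitary (M : Matrix (Fin n) (Fin n) ℝ) (hM : M.IsSymm) (t : ℝ) :
    (transU M t)ᴴ * transU M t = 1 := by
  set A : Matrix (Fin n) (Fin n) ℂ := (Complex.I * (t : ℂ)) • M.map Complex.ofReal with hA
  have hAH : Aᴴ = -A := by
    rw [hA, Matrix.conjTranspose_smul]
    have h1 : (M.map Complex.ofReal)ᴴ = M.map Complex.ofReal := by
      ext i j
      simp only [Matrix.conjTranspose_apply, Matrix.map_apply, Complex.star_def,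
        Complex.conj_ofReal, Complex.ofReal_inj]
      exact congrFun (congrFun hM j) i ▸ rfl
    rw [h1, ← neg_smul]
    congr 1
    simp [Complex.ext_iff]
  show (NormedSpace.exp A)ᴴ * NormedSpace.exp A = 1
  rw [← Matrix.exp_conjTranspose, hAH, ← Matrix.exp_add_of_commute (-A) A ((Commute.refl A).neg_left),
    neg_add_cancel, exp_zero]

lemma unitary_dot (U : Matrix (Fin n) (Fin n) ℂ) (hU : Uᴴ * U = 1) (x y : Fin n → ℂ) :
    star (U *ᵥ x) ⬝ᵥ (U *ᵥ y) = star x ⬝ᵥ y := by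
  rw [Matrix.star_mulVec, Matrix.dotProduct_mulVec, Matrix.vecMul_vecMul, hU, Matrix.vecMul_one]

end Aux

/-- an automorphism fixing `b` but not `a` forbids PGST between `e_a`
and the plus state `(e_b + e_c)/√2`. -/
theorem no_pgst_vertex_to_plus_of_automorphism {n : ℕ}
    (M : Matrix (Fin n) (Fin n) ℝ) (hM : M.IsSymm)
    (a b c : Fin n) (hbc : b ≠ c)
    (σ : Equiv.Perm (Fin n)) (hcomm : permMat σ * M = M * permMat σ)
    (hfixb : permMat σ *ᵥ eVecR b = eVecR b)
    (hmovea : permMat σ *ᵥ eVecR a ≠ eVecR a) :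
    ¬ ∃ (t : ℕ → ℝ) (γ : ℂ), ‖γ‖ = 1 ∧
      Tendsto (fun k => (transU M (t k)).mulVec (eVec a)) atTop (nhds (γ • plusState b c)) := by
  rintro ⟨t, γ, hγ, htend⟩
  set Pc : Matrix (Fin n) (Fin n) ℂ := (permMat σ).map Complex.ofReal with hPc
  -- σ fixes b, moves a
  have hσb : σ b = b := eVecR_inj ((permMat_mulVec_eVecR σ b).symm.trans hfixb)
  have hσa : σ a ≠ a := fun h => hmovea ((permMat_mulVec_eVecR σ a).trans (by rw [h]))
  -- Pc commutes with each transU M (t k)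
  have hPU : ∀ s : ℝ, Pc * transU M s = transU M s * Pc := by
    intro s
    have h1 : Pc * M.map Complex.ofReal = M.map Complex.ofReal * Pc := by
      have := congrArg (Matrix.map · (Complex.ofRealHom : ℝ →+* ℂ)) hcomm
      simp only [Matrix.map_mul] at this
      exact this
    have h2 : Commute ((Complex.I * (s : ℂ)) • M.map Complex.ofReal) Pc :=
      (Commute.smul_left h1.symm _)
    exact h2.exp_left.symm
  -- second tendsto
  have htend2 : Tendsto (fun k => (transU M (t k)) *ᵥ eVec (σ a)) atTop
      (nhds (γ • (Pc *ᵥ plusState b c))) := by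
    have h3 : ∀ k, (transU M (t k)) *ᵥ eVec (σ a) = Pc *ᵥ ((transU M (t k)) *ᵥ eVec a) := by
      intro k
      rw [← permMatC_mulVec_eVec σ a, Matrix.mulVec_mulVec, Matrix.mulVec_mulVec, hPU]
    have := tendsto_mulVec Pc htend
    rw [Matrix.mulVec_smul] at this
    simpa only [h3] using this
  -- the inner product is constantly 0
  have hdot : Tendsto (fun k => star ((transU M (t k)) *ᵥ eVec a) ⬝ᵥ
      ((transU M (t k)) *ᵥ eVec (σ a))) atTop
      (nhds (star (γ • plusState b c) ⬝ᵥ (γ • (Pc *ᵥ plusState b c)))) :=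
    tendsto_star_dot htend htend2
  have hconst : ∀ k, star ((transU M (t k)) *ᵥ eVec a) ⬝ᵥ
      ((transU M (t k)) *ᵥ eVec (σ a)) = 0 := by
    intro k
    rw [unitary_dot _ (transU_unitary M hM (t k)), star_eVec, eVec_dot, if_neg (Ne.symm hσa)]
  have hzero : star (γ • plusState b c) ⬝ᵥ (γ • (Pc *ᵥ plusState b c)) = 0 := by
    have := tendsto_nhds_unique (by simpa only [hconst] using hdot)
      (tendsto_const_nhds : Tendsto (fun _ : ℕ => (0:ℂ)) atTop (nhds 0))
    exact this
  -- now compute the limit value and get a contradiction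
  have hγγ : (starRingEnd ℂ) γ * γ = 1 := by
    rw [mul_comm, Complex.mul_conj]
    norm_cast
    rw [Complex.normSq_eq_norm_sq, hγ, one_pow]
  have hPv : Pc *ᵥ plusState b c = ((Real.sqrt 2 : ℂ))⁻¹ • (eVec b + eVec (σ c)) := by
    rw [plusState, Matrix.mulVec_smul, Matrix.mulVec_add, permMatC_mulVec_eVec,
      permMatC_mulVec_eVec, hσb]
  have hbσc : b ≠ σ c := fun h => hbc (σ.injective (hσb.trans h))
  have hcb : c ≠ b := Ne.symm hbc
  have hsv : star (plusState b c) = plusState b c := by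
    rw [plusState, star_smul, star_add, star_eVec, star_eVec]
    congr 1
    simp [Complex.ext_iff]
  have hval : star (γ • plusState b c) ⬝ᵥ (γ • (Pc *ᵥ plusState b c)) =
      ((Real.sqrt 2 : ℂ))⁻¹ * ((Real.sqrt 2 : ℂ))⁻¹ *
        (1 + if c = σ c then 1 else 0) := by
    rw [star_smul, smul_dotProduct, dotProduct_smul, smul_eq_mul, smul_eq_mul,
      ← mul_assoc, Complex.star_def, hγγ, one_mul, hsv, hPv, plusState,
      smul_dotProduct, dotProduct_smul, smul_eq_mul, smul_eq_mul,
      add_dotProduct, dotProduct_add, dotProduct_add,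
      eVec_dot, eVec_dot, eVec_dot, eVec_dot,
      if_pos rfl, if_neg hbσc, if_neg hcb]
    ring
  rw [hval] at hzero
  have hs2 : ((Real.sqrt 2 : ℝ) : ℂ) ≠ 0 := by
    norm_cast
    positivity
  have h12 : (1 + if c = σ c then (1:ℂ) else 0) ≠ 0 := by
    split <;> norm_num
  exact h12 (by
    have := mul_eq_zero.mp hzero
    rcases this with h | h
    · rcases mul_eq_zero.mp h with h' | h' <;> exact absurd h' (inv_ne_zero hs2)
    · exact h)
end

section
/- Let M be an n×n real symmetric matrix such that the all-ones vector 𝟙 is an eigenvector of M, let δ ∈ {−1, 1} and ζ ∈ ℝ, and set M̄ = δJ + ζI − M, where J is the n×n all-ones matrix. If τ ∈ ℝ satisfies nτ ∈ 2πℤ, then exp(−iτM̄) = e^{−iτζ} exp(iτM). Consequently, if M exhibits fractional revival from u to v at time τ (i.e., exp(iτM)u = αu + βv with β ≠ 0), then M̄ exhibits fractional revival from u to v at time −τ. -/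
open Matrix Filter

lemma exp_smul_idem {ι : Type*} [Fintype ι] [DecidableEq ι]
    (P : Matrix ι ι ℂ) (hP : P * P = P) (a : ℂ) :
    NormedSpace.exp (a • P) = 1 + (Complex.exp a - 1) • P := by
  letI : SeminormedRing (Matrix ι ι ℂ) := Matrix.linftyOpSemiNormedRing
  letI : NormedRing (Matrix ι ι ℂ) := Matrix.linftyOpNormedRing
  letI : NormedAlgebra ℂ (Matrix ι ι ℂ) := Matrix.linftyOpNormedAlgebra
  have hpow : ∀ k : ℕ, P ^ (k + 1) = P := by
    intro k
    induction k with
    | zero => simp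
    | succ k ih => rw [pow_succ, ih, hP]
  have hsum : Summable fun k : ℕ => (((Nat.factorial k) : ℂ))⁻¹ • (a • P) ^ k :=
    NormedSpace.expSeries_summable' (𝕂 := ℂ) (a • P)
  have hsumC : Summable fun k : ℕ => (((Nat.factorial k) : ℂ))⁻¹ • a ^ k :=
    NormedSpace.expSeries_summable' (𝕂 := ℂ) a
  have hsumC' : Summable fun k : ℕ => (((Nat.factorial (k+1)) : ℂ))⁻¹ * a ^ (k+1) := by
    have := (summable_nat_add_iff 1).mpr hsumC
    simpa [smul_eq_mul] using this
  have hscalar : (∑' k : ℕ, (((Nat.factorial (k+1)) : ℂ))⁻¹ * a ^ (k+1)) = Complex.exp a - 1 := by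
    have h := congrFun (NormedSpace.exp_eq_tsum (𝕂 := ℂ) (𝔸 := ℂ)) a
    rw [← Complex.exp_eq_exp_ℂ] at h
    rw [Summable.tsum_eq_zero_add hsumC] at h
    simp only [pow_zero, Nat.factorial_zero, Nat.cast_one, inv_one, smul_eq_mul, one_mul] at h
    rw [h]; ring
  simp only [NormedSpace.exp_eq_tsum (𝕂 := ℂ)]
  rw [Summable.tsum_eq_zero_add hsum]
  have hterm : ∀ k : ℕ, (((Nat.factorial (k+1)) : ℂ))⁻¹ • (a • P) ^ (k+1)
      = ((((Nat.factorial (k+1)) : ℂ))⁻¹ * a ^ (k+1)) • P := by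
    intro k
    rw [smul_pow, hpow, smul_smul]
  simp only [hterm]
  rw [Summable.tsum_smul_const hsumC', hscalar]
  simp


/-- fractional revival is preserved under complementation
`M̄ = δJ + ζI − M` when `nτ ∈ 2πℤ` and `𝟙` is an eigenvector of `M`. -/
theorem complement_transition_and_FR {n : ℕ} (hn : 0 < n)
    (M : Matrix (Fin n) (Fin n) ℝ) (hM : M.IsSymm)
    (μ : ℝ) (h1 : M *ᵥ (fun _ => (1 : ℝ)) = μ • (fun _ => (1 : ℝ)))
    (δ ζ : ℝ) (hδ : δ = -1 ∨ δ = 1) (τ : ℝ)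
    (hτ : ∃ z : ℤ, (n : ℝ) * τ = 2 * Real.pi * z) :
    transU (δ • Matrix.of (fun _ _ => (1 : ℝ)) + ζ • (1 : Matrix (Fin n) (Fin n) ℝ) - M) (-τ)
        = Complex.exp (-(Complex.I * (τ : ℂ) * (ζ : ℂ))) • transU M τ ∧
    ∀ (u v : Fin n → ℝ), u ⬝ᵥ u = 1 → v ⬝ᵥ v = 1 → LinearIndependent ℝ ![u, v] →
      ∀ (α β : ℂ), β ≠ 0 →
        (transU M τ) *ᵥ cVec u = α • cVec u + β • cVec v →
        ∃ (α' β' : ℂ), β' ≠ 0 ∧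
          (transU (δ • Matrix.of (fun _ _ => (1 : ℝ)) + ζ • (1 : Matrix (Fin n) (Fin n) ℝ) - M) (-τ))
              *ᵥ cVec u = α' • cVec u + β' • cVec v := by
  obtain ⟨z, hz⟩ := hτ
  have hnC : (n : ℂ) ≠ 0 := Nat.cast_ne_zero.mpr hn.ne'
  set A : Matrix (Fin n) (Fin n) ℂ := M.map Complex.ofReal with hA
  set Jc : Matrix (Fin n) (Fin n) ℂ := Matrix.of (fun _ _ => (1 : ℂ)) with hJc
  set c : ℂ := Complex.I * (τ : ℂ) with hc
  -- row and column sums of M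
  have hrow : ∀ i, ∑ k, M i k = μ := by
    intro i
    have := congrFun h1 i
    simpa [Matrix.mulVec, dotProduct] using this
  have hcol : ∀ j, ∑ k, M k j = μ := by
    intro j
    calc ∑ k, M k j = ∑ k, M j k := Finset.sum_congr rfl (fun k _ => hM.apply j k)
    _ = μ := hrow j
  -- commutation of Jc with A
  have hAJc : A * Jc = (μ : ℂ) • Jc := by
    ext i j
    simp only [Matrix.mul_apply, Matrix.smul_apply, Matrix.of_apply, hA, hJc,
      Matrix.map_apply, mul_one, smul_eq_mul]
    rw [← Complex.ofReal_sum, hrow i]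
  have hJcA : Jc * A = (μ : ℂ) • Jc := by
    ext i j
    simp only [Matrix.mul_apply, Matrix.smul_apply, Matrix.of_apply, hA, hJc,
      Matrix.map_apply, one_mul, smul_eq_mul]
    rw [← Complex.ofReal_sum, hcol j]
    ring
  have hcomm : Commute Jc A := by
    unfold Commute SemiconjBy
    rw [hJcA, hAJc]
  -- the three commuting pieces
  set X : Matrix (Fin n) (Fin n) ℂ := (-(c * (δ : ℂ))) • Jc with hX
  set Y : Matrix (Fin n) (Fin n) ℂ := c • A with hY
  set Z : Matrix (Fin n) (Fin n) ℂ := (-(c * (ζ : ℂ))) • (1 : Matrix (Fin n) (Fin n) ℂ) with hZ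
  have hdecomp : (Complex.I * ((-τ : ℝ) : ℂ)) •
      ((δ • Matrix.of (fun _ _ => (1 : ℝ)) + ζ • (1 : Matrix (Fin n) (Fin n) ℝ) - M).map
        Complex.ofReal) = X + (Y + Z) := by
    ext i j
    by_cases h : i = j <;>
      simp only [hX, hY, hZ, hA, hJc, hc, Matrix.smul_apply, Matrix.add_apply,
        Matrix.sub_apply, Matrix.map_apply, Matrix.one_apply, Matrix.of_apply, h,
        if_true, if_false, smul_eq_mul] <;>
      push_cast <;> ring
  have hcXY : Commute X (Y + Z) := by
    refine Commute.add_right ?_ ?_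
    · exact (hcomm.smul_left _).smul_right _
    · exact ((Commute.one_right Jc).smul_left _).smul_right _
  have hcYZ : Commute Y Z := ((Commute.one_right A).smul_left _).smul_right _
  -- exp X = 1
  have hcn : c * (n : ℂ) = 2 * (Real.pi : ℂ) * (z : ℂ) * Complex.I := by
    have h2 : (n : ℂ) * (τ : ℂ) = 2 * (Real.pi : ℂ) * (z : ℂ) := by exact_mod_cast hz
    calc c * (n : ℂ) = ((n : ℂ) * (τ : ℂ)) * Complex.I := by rw [hc]; ring
    _ = 2 * (Real.pi : ℂ) * (z : ℂ) * Complex.I := by rw [h2]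
  have hP : ((n : ℂ)⁻¹ • Jc) * ((n : ℂ)⁻¹ • Jc) = (n : ℂ)⁻¹ • Jc := by
    ext i j
    simp only [Matrix.mul_apply, Matrix.smul_apply, Matrix.of_apply, hJc, smul_eq_mul,
      mul_one, Finset.sum_const, Finset.card_univ, Fintype.card_fin, nsmul_eq_mul]
    field_simp
  have hXa : X = (-(c * (δ : ℂ)) * (n : ℂ)) • ((n : ℂ)⁻¹ • Jc) := by
    rw [smul_smul, hX]
    congr 1
    field_simp
  have hexpa : Complex.exp (-(c * (δ : ℂ)) * (n : ℂ)) = 1 := by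
    rcases hδ with h | h <;> subst h
    · have : (-(c * ((-1 : ℝ) : ℂ)) * (n : ℂ)) = (z : ℤ) * (2 * (Real.pi : ℂ) * Complex.I) := by
        push_cast
        linear_combination hcn
      rw [this, Complex.exp_int_mul_two_pi_mul_I]
    · have : (-(c * ((1 : ℝ) : ℂ)) * (n : ℂ)) = ((-z : ℤ) : ℂ) * (2 * (Real.pi : ℂ) * Complex.I) := by
        push_cast
        linear_combination -hcn
      rw [this, Complex.exp_int_mul_two_pi_mul_I]
  have hexpX : NormedSpace.exp X = 1 := by
    rw [hXa, exp_smul_idem _ hP, hexpa]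
    simp
  -- exp Z
  have hexpZ : NormedSpace.exp Z = Complex.exp (-(c * (ζ : ℂ))) • 1 := by
    rw [hZ, exp_smul_idem 1 (one_mul 1), sub_smul, one_smul]
    abel
  have main : transU (δ • Matrix.of (fun _ _ => (1 : ℝ)) + ζ • (1 : Matrix (Fin n) (Fin n) ℝ) - M)
      (-τ) = Complex.exp (-(Complex.I * (τ : ℂ) * (ζ : ℂ))) • transU M τ := by
    rw [transU, hdecomp, Matrix.exp_add_of_commute _ _ hcXY,
      Matrix.exp_add_of_commute _ _ hcYZ, hexpX, hexpZ, one_mul,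
      mul_smul_comm, mul_one]
    have : -(c * (ζ : ℂ)) = -(Complex.I * (τ : ℂ) * (ζ : ℂ)) := by rw [hc]
    rw [this]
    rfl
  refine ⟨main, ?_⟩
  intro u v _ _ _ α β hβ hFR
  refine ⟨Complex.exp (-(Complex.I * (τ : ℂ) * (ζ : ℂ))) * α,
    Complex.exp (-(Complex.I * (τ : ℂ) * (ζ : ℂ))) * β,
    mul_ne_zero (Complex.exp_ne_zero _) hβ, ?_⟩
  rw [main, Matrix.smul_mulVec, hFR, smul_add, smul_smul, smul_smul]
end

section
/- Let G be a simple graph on n vertices with Laplacian matrix L(G), let L(Ḡ) = nI − J − L(G) be the Laplacian of its complement, and let H be a simple graph on m vertices with Laplacian L(H). Let L(G+H) be the Laplacian of the join, given in block form by L(G+H) = [[L(G) + mI_n, −J_{n×m}],[−J_{m×n}, L(H) + nI_m]]. Suppose exp(iτ L(Ḡ)) u = α u + β v for some real unit vectors u, v ∈ ℝ^n that are linearly independent and some α, β ∈ ℂ with β ≠ 0, and suppose τ(n+m) ∈ 2πℤ. Then exp(−iτ L(G+H)) [uᵀ 0]ᵀ = α [uᵀ 0]ᵀ + β [vᵀ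 0]ᵀ; in particular the join G + H exhibits fractional revival from [uᵀ 0]ᵀ to [vᵀ 0]ᵀ relative to its Laplacian matrix. -/
open Matrix Filter

/-- exp of a scalar multiple of an idempotent. -/
theorem exp_smul_idem' {A : Type*} [NormedRing A] [NormedAlgebra ℂ A] [CompleteSpace A]
    (p : A) (hp : p * p = p) (z : ℂ) :
    NormedSpace.exp (z • p) = 1 + (Complex.exp z - 1) • p := by
  have hpow : ∀ k : ℕ, (z • p) ^ (k + 1) = z ^ (k + 1) • p := by
    intro k
    induction k with
    | zero => simp
    | succ k ih =>
      rw [pow_succ, ih, smul_mul_assoc, mul_smul_comm, hp, smul_smul, ← pow_succ]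
  have hsummc : Summable (fun k : ℕ => ((Nat.factorial k : ℂ))⁻¹ • z ^ k) :=
    NormedSpace.expSeries_summable' (𝕂 := ℂ) z
  have hsum : Summable (fun k : ℕ => ((Nat.factorial k : ℂ))⁻¹ • (z • p) ^ k) :=
    NormedSpace.expSeries_summable' (𝕂 := ℂ) (z • p)
  simp only [NormedSpace.exp_eq_tsum ℂ]
  rw [Summable.tsum_eq_zero_add hsum]
  simp only [pow_zero, Nat.factorial_zero, Nat.cast_one, inv_one, one_smul]
  congr 1
  have h1 : ∀ k : ℕ, ((Nat.factorial (k+1) : ℂ))⁻¹ • (z • p) ^ (k + 1)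
      = (((Nat.factorial (k+1) : ℂ))⁻¹ • z ^ (k + 1)) • p := by
    intro k; rw [hpow, smul_smul, smul_eq_mul]
  simp only [h1]
  have hs2 : Summable (fun k : ℕ => ((Nat.factorial (k+1) : ℂ))⁻¹ • z ^ (k+1)) :=
    hsummc.comp_injective Nat.succ_injective
  rw [Summable.tsum_smul_const hs2]
  congr 1
  have h2 : Complex.exp z = 1 + ∑' k : ℕ, ((Nat.factorial (k+1) : ℂ))⁻¹ • z ^ (k + 1) := by
    rw [Complex.exp_eq_exp_ℂ]
    simp only [NormedSpace.exp_eq_tsum ℂ]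
    rw [Summable.tsum_eq_zero_add hsummc]
    simp
  rw [h2]; ring

theorem matrix_exp_smul_idem' {ι : Type*} [Fintype ι] [DecidableEq ι]
    (p : Matrix ι ι ℂ) (hp : p * p = p) (z : ℂ) :
    NormedSpace.exp (z • p) = 1 + (Complex.exp z - 1) • p := by
  letI : SeminormedRing (Matrix ι ι ℂ) := Matrix.linftyOpSemiNormedRing
  letI : NormedRing (Matrix ι ι ℂ) := Matrix.linftyOpNormedRing
  letI : NormedAlgebra ℂ (Matrix ι ι ℂ) := Matrix.linftyOpNormedAlgebra
  exact exp_smul_idem' p hp z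

theorem hasSum_fromBlocks_diag' {p q : Type*} [Fintype p] [Fintype q]
    {f : ℕ → Matrix p p ℂ} {g : ℕ → Matrix q q ℂ} {a : Matrix p p ℂ} {b : Matrix q q ℂ}
    (hf : HasSum f a) (hg : HasSum g b) :
    HasSum (fun k => Matrix.fromBlocks (f k) 0 0 (g k)) (Matrix.fromBlocks a 0 0 b) := by
  have hφcont : Continuous
      (fun x : Matrix p p ℂ × Matrix q q ℂ => Matrix.fromBlocks x.1 0 0 x.2) :=
    Continuous.matrix_fromBlocks continuous_fst continuous_const continuous_const continuous_snd
  let φ : Matrix p p ℂ × Matrix q q ℂ →+ Matrix (p ⊕ q) (p ⊕ q) ℂ :=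
    { toFun := fun x => Matrix.fromBlocks x.1 0 0 x.2
      map_zero' := Matrix.fromBlocks_zero
      map_add' := by
        intro x y
        show Matrix.fromBlocks (x.1 + y.1) 0 0 (x.2 + y.2) = _
        ext i j
        rcases i with i | i <;> rcases j with j | j <;>
          simp [Matrix.fromBlocks] }
  exact (hf.prodMk hg).map φ hφcont

theorem exp_fromBlocks' {p q : Type*} [Fintype p] [DecidableEq p] [Fintype q] [DecidableEq q]
    (A : Matrix p p ℂ) (B : Matrix q q ℂ) :
    NormedSpace.exp (Matrix.fromBlocks A 0 0 B)
      = Matrix.fromBlocks (NormedSpace.exp A) 0 0 (NormedSpace.exp B) := by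
  have hpow : ∀ k : ℕ,
      (Matrix.fromBlocks A 0 0 B) ^ k = Matrix.fromBlocks (A ^ k) 0 0 (B ^ k) := by
    intro k
    induction k with
    | zero => simp [Matrix.fromBlocks_one]
    | succ k ih => rw [pow_succ, ih, Matrix.fromBlocks_multiply]; simp [pow_succ]
  letI : SeminormedRing (Matrix p p ℂ) := Matrix.linftyOpSemiNormedRing
  letI : NormedRing (Matrix p p ℂ) := Matrix.linftyOpNormedRing
  letI : NormedAlgebra ℂ (Matrix p p ℂ) := Matrix.linftyOpNormedAlgebra
  letI : SeminormedRing (Matrix q q ℂ) := Matrix.linftyOpSemiNormedRing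
  letI : NormedRing (Matrix q q ℂ) := Matrix.linftyOpNormedRing
  letI : NormedAlgebra ℂ (Matrix q q ℂ) := Matrix.linftyOpNormedAlgebra
  have hA : Summable (fun k : ℕ => ((Nat.factorial k : ℂ))⁻¹ • A ^ k) :=
    NormedSpace.expSeries_summable' (𝕂 := ℂ) A
  have hB : Summable (fun k : ℕ => ((Nat.factorial k : ℂ))⁻¹ • B ^ k) :=
    NormedSpace.expSeries_summable' (𝕂 := ℂ) B
  simp only [NormedSpace.exp_eq_tsum ℂ]
  have hsm : ∀ k : ℕ, ((Nat.factorial k : ℂ))⁻¹ • Matrix.fromBlocks (A ^ k) 0 0 (B ^ k)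
      = Matrix.fromBlocks (((Nat.factorial k : ℂ))⁻¹ • A ^ k) 0 0
          (((Nat.factorial k : ℂ))⁻¹ • B ^ k) := by
    intro k; rw [Matrix.fromBlocks_smul]; simp
  simp only [hpow, hsm]
  exact (hasSum_fromBlocks_diag' hA.hasSum hB.hasSum).tsum_eq

/-- if the complement of `G` has Laplacian fractional revival from `u` to `v`
at time `τ` with `τ(n+m) ∈ 2πℤ`, then the join `G + H` has Laplacian fractional revival
from `[uᵀ 0]ᵀ` to `[vᵀ 0]ᵀ` at time `−τ`. -/
theorem join_laplacian_FR {n m : ℕ}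
    (G : SimpleGraph (Fin n)) [DecidableRel G.Adj]
    (H : SimpleGraph (Fin m)) [DecidableRel H.Adj]
    (u v : Fin n → ℝ) (hu : u ⬝ᵥ u = 1) (hv : v ⬝ᵥ v = 1)
    (hli : LinearIndependent ℝ ![u, v])
    (τ : ℝ) (α β : ℂ) (hβ : β ≠ 0)
    (hτ : ∃ z : ℤ, τ * ((n : ℝ) + (m : ℝ)) = 2 * Real.pi * z)
    (hfr : (transU ((n : ℝ) • (1 : Matrix (Fin n) (Fin n) ℝ) - Matrix.of (fun _ _ => (1 : ℝ))
        - G.lapMatrix ℝ) τ) *ᵥ cVec u = α • cVec u + β • cVec v) :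
    (transU (Matrix.fromBlocks (G.lapMatrix ℝ + (m : ℝ) • (1 : Matrix (Fin n) (Fin n) ℝ))
          (Matrix.of fun _ _ => (-1 : ℝ)) (Matrix.of fun _ _ => (-1 : ℝ))
          (H.lapMatrix ℝ + (n : ℝ) • (1 : Matrix (Fin m) (Fin m) ℝ))) (-τ))
        *ᵥ Sum.elim (cVec u) (0 : Fin m → ℂ)
      = α • Sum.elim (cVec u) (0 : Fin m → ℂ) + β • Sum.elim (cVec v) (0 : Fin m → ℂ) := by
  classical
  obtain ⟨z, hz⟩ := hτ
  have hn : n ≠ 0 := by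
    rintro rfl
    simp [dotProduct] at hu
  set c : ℂ := Complex.I * (τ : ℂ) with hc
  set N : ℂ := (n : ℂ) + (m : ℂ) with hNdef
  have hN0 : N ≠ 0 := by
    have h1 : ((n + m : ℕ) : ℂ) ≠ 0 := Nat.cast_ne_zero.mpr (by omega)
    rw [hNdef]
    exact_mod_cast h1
  have hcN : c * N = (z : ℂ) * (2 * (Real.pi : ℂ) * Complex.I) := by
    have h := congrArg (Complex.ofReal) hz
    push_cast at h
    rw [hc, hNdef]
    linear_combination Complex.I * h
  have he1 : Complex.exp (c * N) = 1 := by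
    rw [hcN]; exact_mod_cast Complex.exp_int_mul_two_pi_mul_I z
  have he2 : Complex.exp (-(c * N)) = 1 := by
    have h := Complex.exp_int_mul_two_pi_mul_I (-z)
    rw [hcN, ← neg_mul]
    push_cast at h
    exact h
  set A' : Matrix (Fin n) (Fin n) ℂ :=
    ((n : ℝ) • (1 : Matrix (Fin n) (Fin n) ℝ) - Matrix.of (fun _ _ => (1 : ℝ))
        - G.lapMatrix ℝ).map Complex.ofReal with hA'
  set B' : Matrix (Fin m) (Fin m) ℂ :=
    ((m : ℝ) • (1 : Matrix (Fin m) (Fin m) ℝ) - Matrix.of (fun _ _ => (1 : ℝ))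
        - H.lapMatrix ℝ).map Complex.ofReal with hB'
  set Jc : Matrix (Fin n ⊕ Fin m) (Fin n ⊕ Fin m) ℂ := Matrix.of (fun _ _ => (1 : ℂ)) with hJc
  set D : Matrix (Fin n ⊕ Fin m) (Fin n ⊕ Fin m) ℂ := Matrix.fromBlocks A' 0 0 B' with hD
  -- row and column sums of A' and B' vanish
  have rowG : ∀ a : Fin n, ∑ k, (G.lapMatrix ℝ) a k = 0 := by
    intro a
    have h0 := congrFun (SimpleGraph.lapMatrix_mulVec_const_eq_zero (G := G) (R := ℝ)) a
    simpa [Matrix.mulVec, dotProduct] using h0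
  have rowH : ∀ a : Fin m, ∑ k, (H.lapMatrix ℝ) a k = 0 := by
    intro a
    have h0 := congrFun (SimpleGraph.lapMatrix_mulVec_const_eq_zero (G := H) (R := ℝ)) a
    simpa [Matrix.mulVec, dotProduct] using h0
  have rowA' : ∀ a : Fin n, ∑ k, A' a k = 0 := by
    intro a
    have hre : ∑ k, (((n : ℝ) • (1 : Matrix (Fin n) (Fin n) ℝ) - Matrix.of (fun _ _ => (1 : ℝ))
        - G.lapMatrix ℝ : Matrix (Fin n) (Fin n) ℝ)) a k = 0 := by
      simp [Matrix.sub_apply, Finset.sum_sub_distrib, Matrix.smul_apply, Matrix.one_apply,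
        Finset.sum_ite_eq, rowG a, Finset.card_univ, smul_eq_mul, mul_ite]
    have h2 := congrArg Complex.ofReal hre
    rw [Complex.ofReal_sum] at h2
    simpa [hA', Matrix.map_apply] using h2
  have rowB' : ∀ a : Fin m, ∑ k, B' a k = 0 := by
    intro a
    have hre : ∑ k, (((m : ℝ) • (1 : Matrix (Fin m) (Fin m) ℝ) - Matrix.of (fun _ _ => (1 : ℝ))
        - H.lapMatrix ℝ : Matrix (Fin m) (Fin m) ℝ)) a k = 0 := by
      simp [Matrix.sub_apply, Finset.sum_sub_distrib, Matrix.smul_apply, Matrix.one_apply,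
        Finset.sum_ite_eq, rowH a, Finset.card_univ, smul_eq_mul, mul_ite]
    have h2 := congrArg Complex.ofReal hre
    rw [Complex.ofReal_sum] at h2
    simpa [hB', Matrix.map_apply] using h2
  have symmA' : ∀ i j, A' i j = A' j i := by
    intro i j
    have hsg := (SimpleGraph.isSymm_lapMatrix (G := G) (R := ℝ)).apply i j
    by_cases h : i = j
    · subst h; rfl
    · simp [hA', Matrix.map_apply, Matrix.sub_apply, Matrix.smul_apply, Matrix.one_apply,
        h, Ne.symm h, hsg]
  have symmB' : ∀ i j, B' i j = B' j i := by
    intro i j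
    have hsg := (SimpleGraph.isSymm_lapMatrix (G := H) (R := ℝ)).apply i j
    by_cases h : i = j
    · subst h; rfl
    · simp [hB', Matrix.map_apply, Matrix.sub_apply, Matrix.smul_apply, Matrix.one_apply,
        h, Ne.symm h, hsg]
  have colA' : ∀ a : Fin n, ∑ k, A' k a = 0 := by
    intro a
    calc ∑ k, A' k a = ∑ k, A' a k := Finset.sum_congr rfl (fun k _ => symmA' k a)
      _ = 0 := rowA' a
  have colB' : ∀ a : Fin m, ∑ k, B' k a = 0 := by
    intro a
    calc ∑ k, B' k a = ∑ k, B' a k := Finset.sum_congr rfl (fun k _ => symmB' k a)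
      _ = 0 := rowB' a
  have hDJ : D * Jc = 0 := by
    ext i j
    rcases i with i | i
    · simp only [Matrix.mul_apply, hJc, Matrix.of_apply, mul_one, Matrix.zero_apply, hD]
      rw [Fintype.sum_sum_type]
      simp [Matrix.fromBlocks, rowA' i]
    · simp only [Matrix.mul_apply, hJc, Matrix.of_apply, mul_one, Matrix.zero_apply, hD]
      rw [Fintype.sum_sum_type]
      simp [Matrix.fromBlocks, rowB' i]
  have hJD : Jc * D = 0 := by
    ext i j
    rcases j with j | j
    · simp only [Matrix.mul_apply, hJc, Matrix.of_apply, one_mul, Matrix.zero_apply, hD]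
      rw [Fintype.sum_sum_type]
      simp [Matrix.fromBlocks, colA' j]
    · simp only [Matrix.mul_apply, hJc, Matrix.of_apply, one_mul, Matrix.zero_apply, hD]
      rw [Fintype.sum_sum_type]
      simp [Matrix.fromBlocks, colB' j]
  have hcomm1 : Commute (c • D) (c • Jc) := by
    show (c • D) * (c • Jc) = (c • Jc) * (c • D)
    rw [Matrix.smul_mul, Matrix.mul_smul, hDJ, Matrix.smul_mul, Matrix.mul_smul, hJD]
  have hcomm2 : Commute (c • D + c • Jc)
      ((-(c * N)) • (1 : Matrix (Fin n ⊕ Fin m) (Fin n ⊕ Fin m) ℂ)) :=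
    (Commute.one_right _).smul_right _
  have hJJ : Jc * Jc = N • Jc := by
    ext i j
    simp only [Matrix.mul_apply, hJc, Matrix.of_apply, mul_one, Matrix.smul_apply,
      Finset.sum_const, Finset.card_univ, smul_eq_mul, mul_one, nsmul_eq_mul]
    rw [hNdef]
    push_cast [Fintype.card_sum, Fintype.card_fin]
    ring
  have hP : ((N⁻¹ • Jc) * (N⁻¹ • Jc) : Matrix (Fin n ⊕ Fin m) (Fin n ⊕ Fin m) ℂ)
      = N⁻¹ • Jc := by
    rw [Matrix.smul_mul, Matrix.mul_smul, hJJ, smul_smul, smul_smul]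
    congr 1
    field_simp
  have hcJ : c • Jc = (c * N) • (N⁻¹ • Jc) := by
    rw [smul_smul]
    congr 1
    field_simp
  have hexpJ : NormedSpace.exp (c • Jc) = 1 := by
    rw [hcJ, matrix_exp_smul_idem' _ hP, he1]
    simp
  have hexpZ : NormedSpace.exp
      ((-(c * N)) • (1 : Matrix (Fin n ⊕ Fin m) (Fin n ⊕ Fin m) ℂ)) = 1 := by
    rw [matrix_exp_smul_idem' (1 : Matrix (Fin n ⊕ Fin m) (Fin n ⊕ Fin m) ℂ) (one_mul 1), he2]
    simp
  have key : (Complex.I * ((-τ : ℝ) : ℂ)) •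
      ((Matrix.fromBlocks (G.lapMatrix ℝ + (m : ℝ) • (1 : Matrix (Fin n) (Fin n) ℝ))
          (Matrix.of fun _ _ => (-1 : ℝ)) (Matrix.of fun _ _ => (-1 : ℝ))
          (H.lapMatrix ℝ + (n : ℝ) • (1 : Matrix (Fin m) (Fin m) ℝ))).map Complex.ofReal)
      = c • D + c • Jc + (-(c * N)) • 1 := by
    ext i j
    rcases i with i | i <;> rcases j with j | j
    · by_cases h : i = j <;>
        simp only [hD, hA', hJc, hc, hNdef, Matrix.smul_apply, Matrix.add_apply,
          Matrix.map_apply, Matrix.fromBlocks_apply₁₁, Matrix.sub_apply, Matrix.one_apply,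
          Matrix.of_apply, Matrix.zero_apply, smul_eq_mul, Sum.inl.injEq, h,
          if_true, if_false, Complex.ofReal_neg] <;>
        push_cast <;> ring
    · simp only [hD, hA', hB', hJc, hc, hNdef, Matrix.smul_apply, Matrix.add_apply,
        Matrix.map_apply, Matrix.fromBlocks_apply₁₂, Matrix.sub_apply, Matrix.one_apply,
        Matrix.of_apply, Matrix.zero_apply, smul_eq_mul, Complex.ofReal_neg,
        reduceCtorEq, if_false]
      push_cast
      ring
    · simp only [hD, hA', hB', hJc, hc, hNdef, Matrix.smul_apply, Matrix.add_apply,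
        Matrix.map_apply, Matrix.fromBlocks_apply₂₁, Matrix.sub_apply, Matrix.one_apply,
        Matrix.of_apply, Matrix.zero_apply, smul_eq_mul, Complex.ofReal_neg,
        reduceCtorEq, if_false]
      push_cast
      ring
    · by_cases h : i = j <;>
        simp only [hD, hB', hJc, hc, hNdef, Matrix.smul_apply, Matrix.add_apply,
          Matrix.map_apply, Matrix.fromBlocks_apply₂₂, Matrix.sub_apply, Matrix.one_apply,
          Matrix.of_apply, Matrix.zero_apply, smul_eq_mul, Sum.inr.injEq, h,
          if_true, if_false, Complex.ofReal_neg] <;>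
        push_cast <;> ring
  have hDblocks : c • D = Matrix.fromBlocks (c • A') 0 0 (c • B') := by
    rw [hD, Matrix.fromBlocks_smul]
    simp
  have hfr' : NormedSpace.exp (c • A') *ᵥ cVec u = α • cVec u + β • cVec v := by
    simpa [transU, hc, hA'] using hfr
  show NormedSpace.exp _ *ᵥ _ = _
  rw [key, Matrix.exp_add_of_commute _ _ hcomm2,
    Matrix.exp_add_of_commute _ _ hcomm1,
    hexpJ, hexpZ, mul_one, mul_one, hDblocks, exp_fromBlocks', Matrix.fromBlocks_mulVec]
  funext x
  rcases x with x | x <;>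
    simp [hfr', Matrix.mulVec_zero, Matrix.zero_mulVec, Sum.elim_comp_inl, Sum.elim_comp_inr]
end

section
/- Let M be an n×n real symmetric matrix, let u ∈ ℝ^n, and let δ, ζ ∈ ℝ. If the all-ones vector 𝟙 is orthogonal to each of the vectors u, Mu, M²u, …, M^{n−1}u (i.e., 𝟙ᵀ M^k u = 0 for 0 ≤ k ≤ n−1), then for every t ∈ ℝ, exp(it(δJ + ζI − M)) u = e^{itζ} exp(−itM) u, where J is the n×n all-ones matrix. -/
open Matrix Filter

section CTOAux
open Polynomial

private theorem exp_mulVec_congr {n : ℕ} (A B : Matrix (Fin n) (Fin n) ℂ) (u : Fin n → ℂ)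
    (h : ∀ k : ℕ, (A ^ k) *ᵥ u = (B ^ k) *ᵥ u) :
    (NormedSpace.exp A) *ᵥ u = (NormedSpace.exp B) *ᵥ u := by
  letI : NormedRing (Matrix (Fin n) (Fin n) ℂ) := Matrix.linftyOpNormedRing
  letI : NormedAlgebra ℂ (Matrix (Fin n) (Fin n) ℂ) := Matrix.linftyOpNormedAlgebra
  let L : Matrix (Fin n) (Fin n) ℂ →ₗ[ℂ] (Fin n → ℂ) :=
    { toFun := fun X => X *ᵥ u
      map_add' := fun X Y => Matrix.add_mulVec X Y u
      map_smul' := fun c X => Matrix.smul_mulVec c X u }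
  let Lc : Matrix (Fin n) (Fin n) ℂ →L[ℂ] (Fin n → ℂ) :=
    LinearMap.toContinuousLinearMap L
  have hA := NormedSpace.expSeries_summable' (𝕂 := ℂ) A
  have hB := NormedSpace.expSeries_summable' (𝕂 := ℂ) B
  have key : ∀ (X : Matrix (Fin n) (Fin n) ℂ),
      (Summable fun k : ℕ => ((k.factorial : ℂ))⁻¹ • X ^ k) →
      (NormedSpace.exp X) *ᵥ u = ∑' k : ℕ, ((k.factorial : ℂ))⁻¹ • (X ^ k *ᵥ u) := by
    intro X hX
    have : (NormedSpace.exp X) *ᵥ u = Lc (∑' k : ℕ, ((k.factorial : ℂ))⁻¹ • X ^ k) := by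
      rw [NormedSpace.exp_eq_tsum ℂ]; rfl
    rw [this, Lc.map_tsum hX]
    simp [Lc, L, Matrix.smul_mulVec]
  rw [key A hA, key B hB]
  exact tsum_congr fun k => by rw [h k]

private theorem dot_aeval_eq_zero {R : Type*} [CommRing R] {n : ℕ}
    (M : Matrix (Fin n) (Fin n) R) (u w : Fin n → R)
    (h : ∀ j : ℕ, w ⬝ᵥ ((M ^ j) *ᵥ u) = 0) (p : R[X]) :
    w ⬝ᵥ ((aeval M p) *ᵥ u) = 0 := by
  induction p using Polynomial.induction_on' with
  | add p q hp hq =>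
      rw [map_add, Matrix.add_mulVec, dotProduct_add, hp, hq, add_zero]
  | monomial k a =>
      rw [← Polynomial.C_mul_X_pow_eq_monomial, _root_.map_mul, _root_.map_pow, Polynomial.aeval_X,
        Polynomial.aeval_C, ← Algebra.smul_def, Matrix.smul_mulVec,
        dotProduct_smul, h k, smul_zero]

private theorem dot_pow_all {n : ℕ} (hn : 0 < n) (M : Matrix (Fin n) (Fin n) ℝ) (u : Fin n → ℝ)
    (horth : ∀ k : ℕ, k ≤ n - 1 → (fun _ => (1 : ℝ)) ⬝ᵥ ((M ^ k) *ᵥ u) = 0) :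
    ∀ k : ℕ, (fun _ => (1 : ℝ)) ⬝ᵥ ((M ^ k) *ᵥ u) = 0 := by
  have hdeg : M.charpoly.natDegree = n := by
    simpa using Matrix.charpoly_natDegree_eq_dim M
  have hch : (aeval M) M.charpoly = 0 := Matrix.aeval_self_charpoly M
  have hsum : ∑ i ∈ Finset.range (n + 1), M.charpoly.coeff i • M ^ i = 0 := by
    have := Polynomial.aeval_eq_sum_range (R := ℝ) (p := M.charpoly) M
    rw [hch, hdeg] at this
    exact this.symm
  have hc : M.charpoly.coeff n = 1 := by
    have := (Matrix.charpoly_monic M).coeff_natDegree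
    rwa [hdeg] at this
  rw [Finset.sum_range_succ, hc, one_smul] at hsum
  have hMn : M ^ n = ∑ i ∈ Finset.range n, (-(M.charpoly.coeff i)) • M ^ i := by
    have h1 : M ^ n = -(∑ i ∈ Finset.range n, M.charpoly.coeff i • M ^ i) :=
      eq_neg_of_add_eq_zero_right hsum
    rw [h1, ← Finset.sum_neg_distrib]
    exact Finset.sum_congr rfl fun i _ => by rw [neg_smul]
  intro k
  induction k using Nat.strong_induction_on with
  | _ k ih =>
    by_cases hk : k ≤ n - 1
    · exact horth k hk
    · have hnk : n ≤ k := by omega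
      have hpow : M ^ k = ∑ i ∈ Finset.range n, (-(M.charpoly.coeff i)) • M ^ (k - n + i) := by
        have h2 : M ^ k = M ^ (k - n) * M ^ n := by rw [← pow_add]; congr 1; omega
        rw [h2, hMn, Finset.mul_sum]
        exact Finset.sum_congr rfl fun i _ => by rw [Matrix.mul_smul, ← pow_add]
      have hms : (∑ i ∈ Finset.range n, (-(M.charpoly.coeff i)) • M ^ (k - n + i)) *ᵥ u
          = ∑ i ∈ Finset.range n, ((-(M.charpoly.coeff i)) • M ^ (k - n + i)) *ᵥ u :=
        map_sum (Matrix.mulVec.addMonoidHomLeft u) _ _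
      have hd : ∀ (s : Finset ℕ) (f : ℕ → Fin n → ℝ),
          (fun _ => (1 : ℝ)) ⬝ᵥ (∑ i ∈ s, f i) = ∑ i ∈ s, (fun _ => (1 : ℝ)) ⬝ᵥ (f i) :=
        fun s f => map_sum (AddMonoidHom.mk' (fun v => (fun _ => (1 : ℝ)) ⬝ᵥ v)
          fun v w => dotProduct_add _ _ _) f s
      rw [hpow, hms, hd]
      refine Finset.sum_eq_zero fun i hi => ?_
      have hi' : i < n := Finset.mem_range.mp hi
      rw [Matrix.smul_mulVec, dotProduct_smul, ih (k - n + i) (by omega)]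
      simp

private theorem dot_pow_complex' {n : ℕ} (M : Matrix (Fin n) (Fin n) ℝ) (u : Fin n → ℝ)
    (h : ∀ k : ℕ, (fun _ => (1 : ℝ)) ⬝ᵥ ((M ^ k) *ᵥ u) = 0) :
    ∀ k : ℕ, (fun _ => (1 : ℂ)) ⬝ᵥ (((M.map Complex.ofReal) ^ k) *ᵥ cVec u) = 0 := by
  intro k
  have hmap : (M.map Complex.ofReal) ^ k = (M ^ k).map Complex.ofReal := by
    have := _root_.map_pow (Complex.ofRealHom.mapMatrix (m := Fin n)) M k
    simp only [RingHom.mapMatrix_apply] at this; exact this.symm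
  have hv : ((M ^ k).map Complex.ofReal) *ᵥ cVec u = fun i => (((M ^ k) *ᵥ u) i : ℂ) := by
    funext i
    exact (RingHom.map_mulVec Complex.ofRealHom (M ^ k) u i).symm
  rw [hmap, hv]
  have h' : ∑ i, ((M ^ k) *ᵥ u) i = 0 := by simpa [dotProduct] using h k
  simp only [dotProduct, one_mul]
  exact_mod_cast h'

private theorem pow_mulVec_eq' {n : ℕ} (M : Matrix (Fin n) (Fin n) ℝ) (u : Fin n → ℝ) (δ ζ : ℝ)
    (h : ∀ k : ℕ, (fun _ => (1 : ℂ)) ⬝ᵥ (((M.map Complex.ofReal) ^ k) *ᵥ cVec u) = 0) :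
    ∀ k : ℕ,
      (((δ : ℂ) • Matrix.of (fun _ _ => (1 : ℂ)) + (ζ : ℂ) • 1 - M.map Complex.ofReal) ^ k)
          *ᵥ cVec u
        = (((ζ : ℂ) • 1 - M.map Complex.ofReal) ^ k) *ᵥ cVec u := by
  set Mc := M.map Complex.ofReal with hMc
  set N : Matrix (Fin n) (Fin n) ℂ := (ζ : ℂ) • 1 - Mc with hN
  have hdot : ∀ k : ℕ, (fun _ => (1 : ℂ)) ⬝ᵥ ((N ^ k) *ᵥ cVec u) = 0 := by
    intro k
    have hNp : N ^ k = Polynomial.aeval Mc ((Polynomial.C (ζ : ℂ) - Polynomial.X) ^ k) := by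
      rw [_root_.map_pow, map_sub, Polynomial.aeval_X, Polynomial.aeval_C,
        Algebra.algebraMap_eq_smul_one]
    rw [hNp]
    exact dot_aeval_eq_zero Mc (cVec u) _ h _
  intro k
  induction k with
  | zero => simp
  | succ k ih =>
    rw [pow_succ', pow_succ', ← Matrix.mulVec_mulVec, ← Matrix.mulVec_mulVec, ih]
    have hJ : (Matrix.of (fun _ _ => (1 : ℂ)) : Matrix (Fin n) (Fin n) ℂ) *ᵥ (N ^ k *ᵥ cVec u) = 0 := by
      funext i
      simpa [Matrix.mulVec, dotProduct] using hdot k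
    rw [show (δ : ℂ) • Matrix.of (fun _ _ => (1 : ℂ)) + (ζ : ℂ) • 1 - Mc
        = (δ : ℂ) • Matrix.of (fun _ _ => (1 : ℂ)) + N from by rw [hN, add_sub_assoc],
      Matrix.add_mulVec, Matrix.smul_mulVec, hJ, smul_zero, zero_add]


private theorem exp_smul_one_mat {n : ℕ} (c : ℂ) :
    NormedSpace.exp (c • (1 : Matrix (Fin n) (Fin n) ℂ)) = Complex.exp c • 1 := by
  letI : NormedRing (Matrix (Fin n) (Fin n) ℂ) := Matrix.linftyOpNormedRing
  letI : NormedAlgebra ℂ (Matrix (Fin n) (Fin n) ℂ) := Matrix.linftyOpNormedAlgebra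
  rw [← Algebra.algebraMap_eq_smul_one]
  refine (NormedSpace.algebraMap_exp_comm (𝔸 := Matrix (Fin n) (Fin n) ℂ) c).symm.trans ?_
  rw [Algebra.algebraMap_eq_smul_one]
  congr 1
  exact (congrFun Complex.exp_eq_exp_ℂ _).symm

/-- if `𝟙ᵀ Mᵏ u = 0` for `0 ≤ k ≤ n−1`, then
`exp(it(δJ + ζI − M)) u = e^{itζ} exp(−itM) u` for all real `t`. -/
theorem complement_transition_of_orthogonal {n : ℕ}
    (M : Matrix (Fin n) (Fin n) ℝ) (hM : M.IsSymm)
    (u : Fin n → ℝ) (δ ζ : ℝ)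
    (horth : ∀ k : ℕ, k ≤ n - 1 → (fun _ => (1 : ℝ)) ⬝ᵥ ((M ^ k) *ᵥ u) = 0) :
    ∀ t : ℝ,
      (transU (δ • Matrix.of (fun _ _ => (1 : ℝ)) + ζ • (1 : Matrix (Fin n) (Fin n) ℝ) - M) t)
          *ᵥ cVec u
        = Complex.exp (Complex.I * (t : ℂ) * (ζ : ℂ)) • ((transU M (-t)) *ᵥ cVec u) := by
  intro t
  rcases Nat.eq_zero_or_pos n with hn | hn
  · haveI : IsEmpty (Fin n) := by subst hn; infer_instance
    exact Subsingleton.elim _ _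
  have horthC := dot_pow_complex' M u (dot_pow_all hn M u horth)
  simp only [transU]
  set Mc := M.map Complex.ofReal with hMc
  have hBmap : (δ • Matrix.of (fun _ _ => (1 : ℝ)) + ζ • (1 : Matrix (Fin n) (Fin n) ℝ)
        - M).map Complex.ofReal
      = (δ : ℂ) • Matrix.of (fun _ _ => (1 : ℂ)) + (ζ : ℂ) • 1 - Mc := by
    ext i j
    by_cases hij : i = j <;>
      simp [Matrix.map_apply, Matrix.one_apply, hij, hMc]
  rw [hBmap]
  have hpows : ∀ k : ℕ,
      (((Complex.I * (t : ℂ)) • ((δ : ℂ) • Matrix.of (fun _ _ => (1 : ℂ)) + (ζ : ℂ) • 1 - Mc)) ^ k)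
          *ᵥ cVec u
        = (((Complex.I * (t : ℂ)) • ((ζ : ℂ) • 1 - Mc)) ^ k) *ᵥ cVec u := by
    intro k
    rw [_root_.smul_pow, _root_.smul_pow, Matrix.smul_mulVec, Matrix.smul_mulVec,
      pow_mulVec_eq' M u δ ζ horthC k]
  rw [exp_mulVec_congr _ _ _ hpows]
  have hsplit : (Complex.I * (t : ℂ)) • ((ζ : ℂ) • 1 - Mc)
      = (Complex.I * (t : ℂ) * (ζ : ℂ)) • (1 : Matrix (Fin n) (Fin n) ℂ)
        + (Complex.I * ((-t : ℝ) : ℂ)) • Mc := by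
    rw [smul_sub, smul_smul,
      show Complex.I * ((-t : ℝ) : ℂ) = -(Complex.I * (t : ℂ)) by push_cast; ring,
      neg_smul, ← sub_eq_add_neg]
  rw [hsplit, Matrix.exp_add_of_commute _ _
    (((Commute.one_left Mc).smul_left (Complex.I * (t : ℂ) * (ζ : ℂ))).smul_right
      (Complex.I * ((-t : ℝ) : ℂ)))]
  rw [exp_smul_one_mat, Matrix.smul_mul, Matrix.one_mul, Matrix.smul_mulVec]

end CTOAux
end

section
/- Let A_G be an n×n real symmetric matrix, A_H an m×m real symmetric matrix, and let N = [[A_G, J_{n×m}],[J_{m×n}, A_H]] (the adjacency matrix of the join when A_G, A_H are adjacency matrices). Let u, v ∈ ℝ^n be linearly independent unit vectors with 𝟙ᵀ A_G^k u = 0 for all 0 ≤ k ≤ n−1. If exp(iτ A_G) u = α u + β v for some α, β ∈ ℂ with β ≠ 0, then exp(iτ N) [uᵀ 0]ᵀ = α [uᵀ 0]ᵀ + β [vᵀ 0]ᵀ; in particular the join exhibits fractional revival from [uᵀ 0]ᵀ to [vᵀ 0]ᵀ at time τ. -/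
open Matrix Filter

section JoinFRAux

open Polynomial

/-- mulVec by a fixed vector, as a continuous linear map in the matrix argument. -/
noncomputable def mulVecCLM {ι : Type*} [Fintype ι] [DecidableEq ι] (w : ι → ℂ) :
    Matrix ι ι ℂ →L[ℂ] (ι → ℂ) :=
  LinearMap.toContinuousLinearMap
    { toFun := fun M => M *ᵥ w
      map_add' := fun a b => Matrix.add_mulVec a b w
      map_smul' := fun c M => Matrix.smul_mulVec c M w }

@[simp] lemma mulVecCLM_apply {ι : Type*} [Fintype ι] [DecidableEq ι] (w : ι → ℂ)
    (M : Matrix ι ι ℂ) : mulVecCLM w M = M *ᵥ w := rfl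

lemma exp_mulVec {ι : Type*} [Fintype ι] [DecidableEq ι] (M : Matrix ι ι ℂ) (w : ι → ℂ) :
    (NormedSpace.exp M) *ᵥ w = ∑' k : ℕ, ((Nat.factorial k : ℂ)⁻¹ • M ^ k) *ᵥ w := by
  letI : SeminormedRing (Matrix ι ι ℂ) := Matrix.linftyOpSemiNormedRing
  letI : NormedRing (Matrix ι ι ℂ) := Matrix.linftyOpNormedRing
  letI : NormedAlgebra ℂ (Matrix ι ι ℂ) := Matrix.linftyOpNormedAlgebra
  rw [NormedSpace.exp_eq_tsum (𝕂 := ℂ)]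
  exact (mulVecCLM w).map_tsum (NormedSpace.expSeries_summable' M)

lemma exp_series_mulVec_summable {ι : Type*} [Fintype ι] [DecidableEq ι]
    (M : Matrix ι ι ℂ) (w : ι → ℂ) :
    Summable fun k : ℕ => ((Nat.factorial k : ℂ)⁻¹ • M ^ k) *ᵥ w := by
  letI : SeminormedRing (Matrix ι ι ℂ) := Matrix.linftyOpSemiNormedRing
  letI : NormedRing (Matrix ι ι ℂ) := Matrix.linftyOpNormedRing
  letI : NormedAlgebra ℂ (Matrix ι ι ℂ) := Matrix.linftyOpNormedAlgebra
  exact (NormedSpace.expSeries_summable' M).map (mulVecCLM w) (mulVecCLM w).continuous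

/-- `Sum.elim · 0` as a continuous linear map. -/
noncomputable def sumElimCLM (n m : ℕ) : (Fin n → ℂ) →L[ℂ] (Fin n ⊕ Fin m → ℂ) :=
  LinearMap.toContinuousLinearMap
    { toFun := fun y => Sum.elim y 0
      map_add' := fun a b => by funext i; cases i <;> simp
      map_smul' := fun c y => by funext i; cases i <;> simp }

@[simp] lemma sumElimCLM_apply (n m : ℕ) (y : Fin n → ℂ) :
    sumElimCLM n m y = Sum.elim y 0 := rfl

lemma ones_orth_all {n : ℕ} (hn : 0 < n) (AG : Matrix (Fin n) (Fin n) ℝ) (u : Fin n → ℝ)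
    (horth : ∀ k : ℕ, k ≤ n - 1 → (fun _ => (1 : ℝ)) ⬝ᵥ ((AG ^ k) *ᵥ u) = 0) :
    ∀ k : ℕ, (fun _ => (1 : ℝ)) ⬝ᵥ ((AG ^ k) *ᵥ u) = 0 := by
  have φdef : ∃ φ : Matrix (Fin n) (Fin n) ℝ →ₗ[ℝ] ℝ,
      ∀ M, φ M = (fun _ => (1 : ℝ)) ⬝ᵥ (M *ᵥ u) := by
    refine ⟨{ toFun := fun M => (fun _ => (1 : ℝ)) ⬝ᵥ (M *ᵥ u)
              map_add' := fun a b => by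
                simp only [Matrix.add_mulVec, dotProduct_add]
              map_smul' := fun c M => by
                simp only [Matrix.smul_mulVec, dotProduct_smul, RingHom.id_apply,
                  smul_eq_mul] }, fun M => rfl⟩
  obtain ⟨φ, hφ⟩ := φdef
  intro k
  rw [Matrix.pow_eq_aeval_mod_charpoly]
  set p := X ^ k %ₘ AG.charpoly with hp
  have hdeg : p.natDegree < n := by
    by_cases h0 : p = 0
    · simpa [h0] using hn
    · rw [natDegree_lt_iff_degree_lt h0]
      have h2 : AG.charpoly.degree = (n : ℕ) := by
        rw [Matrix.charpoly_degree_eq_dim]; simp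
      rw [← h2]
      exact degree_modByMonic_lt _ AG.charpoly_monic
  rw [← hφ, aeval_eq_sum_range' hdeg, map_sum]
  refine Finset.sum_eq_zero fun i hi => ?_
  rw [_root_.map_smul, hφ, horth i (by have := Finset.mem_range.mp hi; omega), smul_zero]

lemma ones_orth_complex {n : ℕ} (AG : Matrix (Fin n) (Fin n) ℝ) (u : Fin n → ℝ)
    (h : ∀ k : ℕ, (fun _ => (1 : ℝ)) ⬝ᵥ ((AG ^ k) *ᵥ u) = 0) (k : ℕ) :
    (fun _ => (1 : ℂ)) ⬝ᵥ (((AG.map Complex.ofReal) ^ k) *ᵥ cVec u) = 0 := by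
  have hpow : (AG.map Complex.ofReal) ^ k = (AG ^ k).map Complex.ofReal :=
    (map_pow (Complex.ofRealHom.mapMatrix) AG k).symm
  have hmv : ((AG ^ k).map Complex.ofReal) *ᵥ cVec u
      = fun i => (((AG ^ k) *ᵥ u) i : ℂ) := by
    funext i
    exact (RingHom.map_mulVec Complex.ofRealHom (AG ^ k) u i).symm
  rw [hpow, hmv]
  have := h k
  simp only [dotProduct, one_mul] at this ⊢
  rw [← Complex.ofReal_sum]
  exact_mod_cast congrArg (Complex.ofReal) this

lemma block_pow_mulVec {n m : ℕ} (Ac : Matrix (Fin n) (Fin n) ℂ)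
    (Hc : Matrix (Fin m) (Fin m) ℂ) (w : Fin n → ℂ)
    (h : ∀ k : ℕ, (fun _ => (1 : ℂ)) ⬝ᵥ ((Ac ^ k) *ᵥ w) = 0) (k : ℕ) :
    ((Matrix.fromBlocks Ac (Matrix.of fun _ _ => (1 : ℂ))
        (Matrix.of fun _ _ => (1 : ℂ)) Hc) ^ k) *ᵥ Sum.elim w (0 : Fin m → ℂ)
      = Sum.elim ((Ac ^ k) *ᵥ w) 0 := by
  induction k with
  | zero => simp [Matrix.one_mulVec]
  | succ k ih =>
    rw [pow_succ', ← Matrix.mulVec_mulVec, ih, Matrix.fromBlocks_mulVec]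
    have h1 : (Sum.elim ((Ac ^ k) *ᵥ w) (0 : Fin m → ℂ)) ∘ Sum.inl = (Ac ^ k) *ᵥ w := rfl
    have h2 : (Sum.elim ((Ac ^ k) *ᵥ w) (0 : Fin m → ℂ)) ∘ Sum.inr = 0 := rfl
    rw [h1, h2, Matrix.mulVec_zero, Matrix.mulVec_zero, add_zero, add_zero,
      Matrix.mulVec_mulVec, ← pow_succ']
    funext i
    cases i with
    | inl i => rfl
    | inr i =>
      have := h k
      simp only [Matrix.mulVec, dotProduct, Matrix.of_apply, one_mul,
        Sum.elim_inr, Pi.zero_apply] at this ⊢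
      exact this

end JoinFRAux

/-- fractional revival passes to the join when `𝟙ᵀ A_Gᵏ u = 0` for all
`0 ≤ k ≤ n−1`. -/
theorem join_adjacency_FR {n m : ℕ}
    (AG : Matrix (Fin n) (Fin n) ℝ) (hAG : AG.IsSymm)
    (AH : Matrix (Fin m) (Fin m) ℝ) (hAH : AH.IsSymm)
    (u v : Fin n → ℝ) (hu : u ⬝ᵥ u = 1) (hv : v ⬝ᵥ v = 1)
    (hli : LinearIndependent ℝ ![u, v])
    (horth : ∀ k : ℕ, k ≤ n - 1 → (fun _ => (1 : ℝ)) ⬝ᵥ ((AG ^ k) *ᵥ u) = 0)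
    (τ : ℝ) (α β : ℂ) (hβ : β ≠ 0)
    (hfr : (transU AG τ) *ᵥ cVec u = α • cVec u + β • cVec v) :
    (transU (Matrix.fromBlocks AG (Matrix.of fun _ _ => (1 : ℝ))
          (Matrix.of fun _ _ => (1 : ℝ)) AH) τ) *ᵥ Sum.elim (cVec u) (0 : Fin m → ℂ)
      = α • Sum.elim (cVec u) (0 : Fin m → ℂ) + β • Sum.elim (cVec v) (0 : Fin m → ℂ) := by
  have hn : 0 < n := by
    rcases Nat.eq_zero_or_pos n with h | h
    · subst h; simp [dotProduct] at hu
    · exact h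
  have hR := ones_orth_all hn AG u horth
  have hC := ones_orth_complex AG u hR
  set Ac := AG.map Complex.ofReal with hAc
  set Hc := AH.map Complex.ofReal with hHc
  set c : ℂ := Complex.I * (τ : ℂ) with hc
  have hmap : (Matrix.fromBlocks AG (Matrix.of fun _ _ => (1 : ℝ))
        (Matrix.of fun _ _ => (1 : ℝ)) AH).map Complex.ofReal
      = Matrix.fromBlocks Ac (Matrix.of fun _ _ => (1 : ℂ))
          (Matrix.of fun _ _ => (1 : ℂ)) Hc := by
    rw [Matrix.fromBlocks_map]
    congr 1 <;> ext i j <;> simp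
  have hpowc : ∀ k : ℕ, ((c • Matrix.fromBlocks Ac (Matrix.of fun _ _ => (1 : ℂ))
        (Matrix.of fun _ _ => (1 : ℂ)) Hc) ^ k) *ᵥ Sum.elim (cVec u) (0 : Fin m → ℂ)
      = Sum.elim (((c • Ac) ^ k) *ᵥ cVec u) 0 := by
    intro k
    rw [smul_pow, smul_pow, Matrix.smul_mulVec, Matrix.smul_mulVec,
      block_pow_mulVec Ac Hc (cVec u) hC k]
    funext i; cases i <;> simp
  have hterm : ∀ k : ℕ, (((Nat.factorial k : ℂ))⁻¹ •
        (c • Matrix.fromBlocks Ac (Matrix.of fun _ _ => (1 : ℂ))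
          (Matrix.of fun _ _ => (1 : ℂ)) Hc) ^ k) *ᵥ Sum.elim (cVec u) (0 : Fin m → ℂ)
      = Sum.elim (((Nat.factorial k : ℂ)⁻¹ • (c • Ac) ^ k) *ᵥ cVec u) 0 := by
    intro k
    rw [Matrix.smul_mulVec, hpowc k, Matrix.smul_mulVec]
    funext i; cases i <;> simp
  have hsum : Summable (fun k : ℕ => ((Nat.factorial k : ℂ)⁻¹ • (c • Ac) ^ k) *ᵥ cVec u) :=
    exp_series_mulVec_summable _ _
  have hfr' : NormedSpace.exp (c • Ac) *ᵥ cVec u = α • cVec u + β • cVec v := hfr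
  calc (transU (Matrix.fromBlocks AG (Matrix.of fun _ _ => (1 : ℝ))
          (Matrix.of fun _ _ => (1 : ℝ)) AH) τ) *ᵥ Sum.elim (cVec u) (0 : Fin m → ℂ)
      = (NormedSpace.exp (c • Matrix.fromBlocks Ac (Matrix.of fun _ _ => (1 : ℂ))
          (Matrix.of fun _ _ => (1 : ℂ)) Hc)) *ᵥ Sum.elim (cVec u) (0 : Fin m → ℂ) := by
        rw [transU, hmap]
    _ = ∑' k : ℕ, (((Nat.factorial k : ℂ))⁻¹ •
          (c • Matrix.fromBlocks Ac (Matrix.of fun _ _ => (1 : ℂ))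
            (Matrix.of fun _ _ => (1 : ℂ)) Hc) ^ k) *ᵥ Sum.elim (cVec u) (0 : Fin m → ℂ) :=
        exp_mulVec _ _
    _ = ∑' k : ℕ, sumElimCLM n m (((Nat.factorial k : ℂ)⁻¹ • (c • Ac) ^ k) *ᵥ cVec u) := by
        refine tsum_congr fun k => ?_
        rw [hterm k, sumElimCLM_apply]
    _ = sumElimCLM n m (∑' k : ℕ, ((Nat.factorial k : ℂ)⁻¹ • (c • Ac) ^ k) *ᵥ cVec u) :=
        ((sumElimCLM n m).map_tsum hsum).symm
    _ = sumElimCLM n m (NormedSpace.exp (c • Ac) *ᵥ cVec u) := by rw [← exp_mulVec]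
    _ = sumElimCLM n m (α • cVec u + β • cVec v) := by rw [hfr']
    _ = α • Sum.elim (cVec u) (0 : Fin m → ℂ) + β • Sum.elim (cVec v) (0 : Fin m → ℂ) := by
        funext i; cases i <;> simp
end

section
/- Let B and C be n×n real symmetric matrices, let N = [[B, C],[C, B]], let u, v ∈ ℝ^n be linearly independent unit vectors, let τ ∈ ℝ, and let α, β ∈ ℂ with β ≠ 0. Then: (a) exp(iτ(B+C)) u = α u + β v if and only if exp(iτN) (1/√2)[uᵀ uᵀ]ᵀ = α (1/√2)[uᵀ uᵀ]ᵀ + β (1/√2)[vᵀ vᵀ]ᵀ; and (b) exp(iτ(B−C)) u = α u + β v if and only if exp(iτN) (1/√2)[uᵀ −uᵀ]ᵀ = α (1/√2)[uᵀ −uᵀ]ᵀ + β (1/√2)[vᵀ −vᵀ]ᵀ. -/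
open Matrix Filter

set_option linter.unnecessarySeqFocus false in
lemma exp_mulVec_intertwine {ι κ : Type*} [Fintype ι] [DecidableEq ι] [Fintype κ] [DecidableEq κ]
    (M : Matrix ι ι ℂ) (K : Matrix κ κ ℂ) (L : (κ → ℂ) →ₗ[ℂ] (ι → ℂ))
    (h : ∀ x, M *ᵥ L x = L (K *ᵥ x)) (x : κ → ℂ) :
    (NormedSpace.exp M) *ᵥ L x = L (NormedSpace.exp K *ᵥ x) := by
  letI : SeminormedRing (Matrix ι ι ℂ) := Matrix.linftyOpSemiNormedRing
  letI : NormedRing (Matrix ι ι ℂ) := Matrix.linftyOpNormedRing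
  letI : NormedAlgebra ℂ (Matrix ι ι ℂ) := Matrix.linftyOpNormedAlgebra
  letI : SeminormedRing (Matrix κ κ ℂ) := Matrix.linftyOpSemiNormedRing
  letI : NormedRing (Matrix κ κ ℂ) := Matrix.linftyOpNormedRing
  letI : NormedAlgebra ℂ (Matrix κ κ ℂ) := Matrix.linftyOpNormedAlgebra
  have hpow : ∀ k : ℕ, M ^ k *ᵥ L x = L (K ^ k *ᵥ x) := by
    intro k
    induction k with
    | zero => simp
    | succ k ih =>
      rw [pow_succ', pow_succ', ← Matrix.mulVec_mulVec, ← Matrix.mulVec_mulVec, ih, h]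
  let F : Matrix ι ι ℂ →ₗ[ℂ] (ι → ℂ) :=
    { toFun := fun A => A *ᵥ L x
      map_add' := fun A A' => Matrix.add_mulVec A A' (L x)
      map_smul' := fun c A => Matrix.smul_mulVec c A (L x) }
  let G : Matrix κ κ ℂ →ₗ[ℂ] (ι → ℂ) :=
    { toFun := fun A => L (A *ᵥ x)
      map_add' := fun A A' => by simp [Matrix.add_mulVec]
      map_smul' := fun c A => by simp [Matrix.smul_mulVec] }
  let F' : Matrix ι ι ℂ →L[ℂ] (ι → ℂ) := LinearMap.toContinuousLinearMap F
  let G' : Matrix κ κ ℂ →L[ℂ] (ι → ℂ) := LinearMap.toContinuousLinearMap G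
  have hsumM := NormedSpace.expSeries_summable' (𝕂 := ℂ) M
  have hsumK := NormedSpace.expSeries_summable' (𝕂 := ℂ) K
  have e1 : NormedSpace.exp M *ᵥ L x = F' (∑' k : ℕ, ((k.factorial : ℂ))⁻¹ • M ^ k) := by
    rw [NormedSpace.exp_eq_tsum ℂ]; rfl
  have e2 : L (NormedSpace.exp K *ᵥ x) = G' (∑' k : ℕ, ((k.factorial : ℂ))⁻¹ • K ^ k) := by
    rw [NormedSpace.exp_eq_tsum ℂ]; rfl
  rw [e1, e2, F'.map_tsum hsumM, G'.map_tsum hsumK]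
  refine tsum_congr fun k => ?_
  simp only [F', G', LinearMap.coe_toContinuousLinearMap', LinearMap.coe_mk, AddHom.coe_mk]
  simp only [F, G, LinearMap.coe_mk, AddHom.coe_mk, Matrix.smul_mulVec, hpow,
    _root_.map_smul]

noncomputable def liftL {n : ℕ} (c : ℂ) : (Fin n → ℂ) →ₗ[ℂ] (Fin n ⊕ Fin n → ℂ) where
  toFun x := Sum.elim x (c • x)
  map_add' x y := by funext i; cases i <;> simp [smul_add]
  map_smul' a x := by funext i; cases i <;> simp [smul_comm a c] <;> ring

lemma double_cover_lift_aux {n : ℕ} (B C : Matrix (Fin n) (Fin n) ℝ)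
    (ε : ℝ) (hε : ε * ε = 1) (τ : ℝ) (α β : ℂ) (u v : Fin n → ℂ) :
    (transU (B + ε • C) τ) *ᵥ u = α • u + β • v ↔
      (transU (Matrix.fromBlocks B C C B) τ) *ᵥ
          (((Real.sqrt 2 : ℂ))⁻¹ • Sum.elim u ((ε : ℂ) • u))
        = α • (((Real.sqrt 2 : ℂ))⁻¹ • Sum.elim u ((ε : ℂ) • u))
          + β • (((Real.sqrt 2 : ℂ))⁻¹ • Sum.elim v ((ε : ℂ) • v)) := by
  set s : ℂ := ((Real.sqrt 2 : ℝ) : ℂ)⁻¹ with hsdef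
  have hs : s ≠ 0 := inv_ne_zero (by exact_mod_cast (Real.sqrt_pos.mpr two_pos).ne')
  set L := liftL (n := n) (ε : ℂ) with hLdef
  have hεc : (ε : ℂ) * (ε : ℂ) = 1 := by rw [← Complex.ofReal_mul, hε, Complex.ofReal_one]
  have hmap : ((B + ε • C).map Complex.ofReal)
      = B.map Complex.ofReal + (ε : ℂ) • C.map Complex.ofReal := by
    ext i j
    simp [Matrix.map_apply]
  have hint : ∀ x, ((Complex.I * τ) • (Matrix.fromBlocks B C C B).map Complex.ofReal) *ᵥ L x
      = L (((Complex.I * τ) • (B + ε • C).map Complex.ofReal) *ᵥ x) := by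
    intro x
    have h0 : ((Matrix.fromBlocks B C C B).map Complex.ofReal) *ᵥ (L x)
        = L (((B + ε • C).map Complex.ofReal) *ᵥ x) := by
      show _ *ᵥ Sum.elim x ((ε : ℂ) • x)
          = Sum.elim (((B + ε • C).map Complex.ofReal) *ᵥ x)
            ((ε : ℂ) • (((B + ε • C).map Complex.ofReal) *ᵥ x))
      rw [Matrix.fromBlocks_map, Matrix.fromBlocks_mulVec]
      simp only [Sum.elim_comp_inl, Sum.elim_comp_inr]
      set yB := B.map Complex.ofReal *ᵥ x with hyB
      set yC := C.map Complex.ofReal *ᵥ x with hyC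
      have expand : ((B + ε • C).map Complex.ofReal) *ᵥ x = yB + (ε : ℂ) • yC := by
        rw [hmap, Matrix.add_mulVec, Matrix.smul_mulVec]
      have e1 : B.map Complex.ofReal *ᵥ ((ε : ℂ) • x) = (ε : ℂ) • yB := Matrix.mulVec_smul ..
      have e2 : C.map Complex.ofReal *ᵥ ((ε : ℂ) • x) = (ε : ℂ) • yC := Matrix.mulVec_smul ..
      rw [expand, e1, e2, smul_add, smul_smul, hεc, one_smul]
      funext i
      cases i <;> simp [add_comm]
    rw [Matrix.smul_mulVec, h0, Matrix.smul_mulVec, _root_.map_smul]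
  have key : ∀ x, transU (Matrix.fromBlocks B C C B) τ *ᵥ L x
      = L (transU (B + ε • C) τ *ᵥ x) := fun x =>
    exp_mulVec_intertwine _ _ L hint x
  have hLinj : Function.Injective L := fun x y h => funext fun i => congrFun h (Sum.inl i)
  have hLu : Sum.elim u ((ε : ℂ) • u) = L u := rfl
  have hLv : Sum.elim v ((ε : ℂ) • v) = L v := rfl
  rw [hLu, hLv, Matrix.mulVec_smul, key]
  constructor
  · intro h
    rw [h, map_add, _root_.map_smul, _root_.map_smul]
    module
  · intro h
    apply hLinj
    apply smul_right_injective ((Fin n ⊕ Fin n) → ℂ) hs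
    show s • L (transU (B + ε • C) τ *ᵥ u) = s • L (α • u + β • v)
    rw [h, map_add, _root_.map_smul, _root_.map_smul]
    module

/-- fractional revival in `B ± C` corresponds to fractional revival in the
double cover `[[B, C], [C, B]]` from the symmetric/antisymmetric lifts of the states. -/
theorem double_cover_FR_lift {n : ℕ}
    (B C : Matrix (Fin n) (Fin n) ℝ) (hB : B.IsSymm) (hC : C.IsSymm)
    (u v : Fin n → ℝ) (hu : u ⬝ᵥ u = 1) (hv : v ⬝ᵥ v = 1)
    (hli : LinearIndependent ℝ ![u, v]) (τ : ℝ) (α β : ℂ) (hβ : β ≠ 0) :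
    ((transU (B + C) τ) *ᵥ cVec u = α • cVec u + β • cVec v ↔
      (transU (Matrix.fromBlocks B C C B) τ) *ᵥ
          (((Real.sqrt 2 : ℂ))⁻¹ • Sum.elim (cVec u) (cVec u))
        = α • (((Real.sqrt 2 : ℂ))⁻¹ • Sum.elim (cVec u) (cVec u))
          + β • (((Real.sqrt 2 : ℂ))⁻¹ • Sum.elim (cVec v) (cVec v))) ∧
    ((transU (B - C) τ) *ᵥ cVec u = α • cVec u + β • cVec v ↔
      (transU (Matrix.fromBlocks B C C B) τ) *ᵥ
          (((Real.sqrt 2 : ℂ))⁻¹ • Sum.elim (cVec u) (-(cVec u)))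
        = α • (((Real.sqrt 2 : ℂ))⁻¹ • Sum.elim (cVec u) (-(cVec u)))
          + β • (((Real.sqrt 2 : ℂ))⁻¹ • Sum.elim (cVec v) (-(cVec v)))) := by
  constructor
  · have h := double_cover_lift_aux B C 1 (by norm_num) τ α β (cVec u) (cVec v)
    simpa using h
  · have h := double_cover_lift_aux B C (-1) (by norm_num) τ α β (cVec u) (cVec v)
    simpa [sub_eq_add_neg] using h
end

section
/- Let n be an even positive integer, let S ⊆ (ℤ/nℤ) \ {0} satisfy S = −S, and let a, b ∈ ℤ/nℤ be distinct vertices with a − b ≠ n/2 in ℤ/nℤ. If the circulant graph Cay(ℤ/nℤ, S) exhibits pretty good plus state transfer between (e_a + e_b)/√2 and a linearly independent plus state (e_c + e_d)/√2 with respect to its adjacency matrix, then e_c + e_d = e_{a + n/2} + e_{b + n/2}. -/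
set_option linter.unusedSectionVars false

open Matrix Filter

namespace PGSTaux

attribute [local instance] Matrix.linftyOpNormedAddCommGroup Matrix.linftyOpNormedRing
  Matrix.linftyOpNormedAlgebra

lemma exp_mulVec {ι : Type*} [Fintype ι] [DecidableEq ι] (M : Matrix ι ι ℂ)
    (v : ι → ℂ) (μ : ℂ) (h : M.mulVec v = μ • v) :
    (NormedSpace.exp M).mulVec v = Complex.exp μ • v := by
  classical
  have hpow : ∀ k : ℕ, (M ^ k).mulVec v = μ ^ k • v := by
    intro k
    induction k with
    | zero => simp
    | succ k ih =>
      rw [pow_succ, ← Matrix.mulVec_mulVec, h, Matrix.mulVec_smul, ih, smul_smul, pow_succ,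
        mul_comm]
  let L0 : Matrix ι ι ℂ →ₗ[ℂ] (ι → ℂ) :=
    { toFun := fun N => N.mulVec v
      map_add' := fun A B => Matrix.add_mulVec A B v
      map_smul' := fun c A => Matrix.smul_mulVec c A v }
  let L : Matrix ι ι ℂ →L[ℂ] (ι → ℂ) := LinearMap.toContinuousLinearMap L0
  have hsum : Summable (fun k : ℕ => (k.factorial⁻¹ : ℂ) • M ^ k) :=
    NormedSpace.expSeries_summable' M
  have hsum2 : Summable (fun k : ℕ => (k.factorial⁻¹ : ℂ) * μ ^ k) := by
    simpa [smul_eq_mul] using NormedSpace.expSeries_summable' (𝕂 := ℂ) μ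
  have hL : (NormedSpace.exp M).mulVec v = L (NormedSpace.exp M) := rfl
  rw [hL, NormedSpace.exp_eq_tsum ℂ, L.map_tsum hsum]
  have h2 : ∀ k : ℕ, L ((k.factorial⁻¹ : ℂ) • M ^ k) = ((k.factorial⁻¹ : ℂ) * μ ^ k) • v := by
    intro k
    rw [_root_.map_smul]
    show (k.factorial⁻¹ : ℂ) • (M ^ k).mulVec v = _
    rw [hpow k, smul_smul]
  rw [tsum_congr h2, hsum2.tsum_smul_const]
  congr 1
  rw [Complex.exp_eq_exp_ℂ, NormedSpace.exp_eq_tsum ℂ]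
  simp [smul_eq_mul]

variable (n : ℕ) [NeZero n]

noncomputable def om : ℂ := Complex.exp (2 * Real.pi * Complex.I / n)

noncomputable def chi (x : ZMod n) : ℂ := om n ^ x.val

lemma om_prim : IsPrimitiveRoot (om n) n :=
  Complex.isPrimitiveRoot_exp n (NeZero.ne n)

lemma om_pow : om n ^ n = 1 := (om_prim n).pow_eq_one

lemma om_pow_mod (m : ℕ) : om n ^ (m % n) = om n ^ m := by
  conv_rhs => rw [← Nat.div_add_mod m n]
  rw [pow_add, pow_mul, om_pow, one_pow, one_mul]

lemma chi_add (x y : ZMod n) : chi n (x + y) = chi n x * chi n y := by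
  rw [chi, chi, chi, ZMod.val_add, om_pow_mod, pow_add]

lemma chi_zero : chi n 0 = 1 := by
  rw [chi, ZMod.val_zero, pow_zero]

lemma chi_mul_neg (x : ZMod n) : chi n x * chi n (-x) = 1 := by
  rw [← chi_add]
  simp [chi_zero]

lemma om_abs : ‖om n‖ = 1 := by
  have h : om n = Complex.exp (((2 * Real.pi / n : ℝ) : ℂ) * Complex.I) := by
    rw [om]; congr 1; push_cast; ring
  rw [h, Complex.norm_exp_ofReal_mul_I]

lemma chi_abs (x : ZMod n) : ‖chi n x‖ = 1 := by
  rw [chi, norm_pow, om_abs, one_pow]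

lemma chi_conj (x : ZMod n) : (starRingEnd ℂ) (chi n x) = chi n (-x) := by
  rw [← Complex.inv_eq_conj (chi_abs n x)]
  exact inv_eq_of_mul_eq_one_right (chi_mul_neg n x)

lemma chi_eq_one_iff {x : ZMod n} : chi n x = 1 ↔ x = 0 := by
  constructor
  · intro h
    have hdvd : n ∣ x.val := ((om_prim n).pow_eq_one_iff_dvd x.val).mp h
    have hlt := ZMod.val_lt x
    have hv : x.val = 0 := Nat.eq_zero_of_dvd_of_lt hdvd hlt
    exact (ZMod.val_eq_zero x).mp hv
  · rintro rfl; exact chi_zero n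

lemma chi_nat_mul (j : ℕ) (y : ZMod n) : chi n ((j : ZMod n) * y) = chi n y ^ j := by
  induction j with
  | zero => simpa using chi_zero n
  | succ j ih =>
    have h : ((j + 1 : ℕ) : ZMod n) * y = (j : ZMod n) * y + y := by push_cast; ring
    rw [h, chi_add, ih, pow_succ]

lemma sum_chi (m : ZMod n) : (∑ k : ZMod n, chi n (k * m)) = if m = 0 then (n : ℂ) else 0 := by
  have h1 : (∑ k : ZMod n, chi n (k * m)) = ∑ j ∈ Finset.range n, chi n m ^ j := by
    refine Finset.sum_nbij' (fun k => k.val) (fun j => (j : ZMod n)) ?_ ?_ ?_ ?_ ?_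
    · intro k _; exact Finset.mem_range.mpr (ZMod.val_lt k)
    · intro j _; exact Finset.mem_univ _
    · intro k _; exact ZMod.natCast_zmod_val k
    · intro j hj; exact ZMod.val_cast_of_lt (Finset.mem_range.mp hj)
    · intro k _
      rw [← chi_nat_mul, ZMod.natCast_zmod_val]
  rw [h1]
  by_cases hm : m = 0
  · rw [if_pos hm, hm]
    simp [chi_zero]
  · rw [if_neg hm, geom_sum_eq (fun h => hm ((chi_eq_one_iff n).mp h)) n]
    have h2 : chi n m ^ n = 1 := by
      rw [← chi_nat_mul, ZMod.natCast_self, zero_mul, chi_zero]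
    rw [h2, sub_self, zero_div]

lemma two_tor (heven : Even n) (x : ZMod n) (hx : x + x = 0) :
    x = 0 ∨ x = ((n / 2 : ℕ) : ZMod n) := by
  have hlt := ZMod.val_lt x
  have hcast : ((x.val + x.val : ℕ) : ZMod n) = 0 := by
    push_cast [ZMod.natCast_zmod_val]
    exact hx
  have hdvd : n ∣ x.val + x.val := (ZMod.natCast_eq_zero_iff _ _).mp hcast
  obtain ⟨m, hm⟩ := heven
  obtain ⟨k, hk⟩ := hdvd
  have hk2 : n * k < n * 2 := by rw [← hk]; omega
  have hklt : k < 2 := lt_of_mul_lt_mul_left hk2 (Nat.zero_le n)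
  interval_cases k
  · left
    have hv : x.val = 0 := by omega
    rw [← ZMod.natCast_zmod_val x, hv, Nat.cast_zero]
  · right
    have hv : x.val = n / 2 := by omega
    rw [← ZMod.natCast_zmod_val x, hv]

variable (S : Finset (ZMod n))

noncomputable def lam (k : ZMod n) : ℂ := ∑ s ∈ S, chi n (-(k * s))

lemma lam_def (k : ZMod n) : lam n S k = ∑ s ∈ S, chi n (-(k * s)) := rfl

lemma sum_neg (hS : ∀ s ∈ S, -s ∈ S) (f : ZMod n → ℂ) :
    ∑ s ∈ S, f (-s) = ∑ s ∈ S, f s := by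
  refine Finset.sum_equiv (Equiv.neg (ZMod n)) (fun i => ⟨fun h => hS i h, fun h => ?_⟩)
    (fun i _ => rfl)
  simpa using hS _ h

lemma lam_conj (hS : ∀ s ∈ S, -s ∈ S) (k : ZMod n) :
    (starRingEnd ℂ) (lam n S k) = lam n S k := by
  rw [lam_def, map_sum]
  calc ∑ s ∈ S, (starRingEnd ℂ) (chi n (-(k * s)))
      = ∑ s ∈ S, chi n (k * s) := by
        refine Finset.sum_congr rfl fun s _ => ?_
        rw [chi_conj, neg_neg]
    _ = ∑ s ∈ S, chi n (k * (-s)) := (sum_neg n S hS (fun s => chi n (k * s))).symm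
    _ = ∑ s ∈ S, chi n (-(k * s)) := by
        refine Finset.sum_congr rfl fun s _ => ?_
        rw [mul_neg]

lemma lam_neg (hS : ∀ s ∈ S, -s ∈ S) : lam n S (-1) = lam n S 1 := by
  rw [lam_def, lam_def]
  calc ∑ s ∈ S, chi n (-(-1 * s))
      = ∑ s ∈ S, chi n (1 * s) := by
        refine Finset.sum_congr rfl fun s _ => ?_
        congr 1; ring
    _ = ∑ s ∈ S, chi n (1 * (-s)) := (sum_neg n S hS (fun s => chi n (1 * s))).symm
    _ = ∑ s ∈ S, chi n (-(1 * s)) := by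
        refine Finset.sum_congr rfl fun s _ => ?_
        congr 1; ring

lemma cay_symm (hS : ∀ s ∈ S, -s ∈ S) : (cayA n S)ᵀ = cayA n S := by
  ext x y
  show (if y - x ∈ S then (1:ℝ) else 0) = (if x - y ∈ S then 1 else 0)
  by_cases h : x - y ∈ S
  · rw [if_pos, if_pos h]
    simpa [neg_sub] using hS _ h
  · rw [if_neg, if_neg h]
    intro hc
    exact h (by simpa [neg_sub] using hS _ hc)

lemma cay_eigen (k : ZMod n) :
    ((cayA n S).map Complex.ofReal) *ᵥ (fun j => chi n (k * j))
      = lam n S k • fun j => chi n (k * j) := by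
  funext x
  have hentry : ∀ y, ((cayA n S).map Complex.ofReal) x y = if x - y ∈ S then (1:ℂ) else 0 := by
    intro y
    show (Complex.ofReal (if x - y ∈ S then (1:ℝ) else 0)) = _
    split_ifs <;> simp
  show (∑ y : ZMod n, ((cayA n S).map Complex.ofReal) x y * chi n (k * y)) = _
  calc (∑ y : ZMod n, ((cayA n S).map Complex.ofReal) x y * chi n (k * y))
      = ∑ y : ZMod n, (if x - y ∈ S then chi n (k * y) else 0) := by
        refine Finset.sum_congr rfl fun y _ => ?_
        rw [hentry y, ite_mul, one_mul, zero_mul]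
    _ = ∑ y ∈ Finset.univ.filter (fun y => x - y ∈ S), chi n (k * y) :=
        (Finset.sum_filter _ _).symm
    _ = ∑ s ∈ S, chi n (k * (x - s)) := by
        refine Finset.sum_nbij' (fun y => x - y) (fun s => x - s) ?_ ?_ ?_ ?_ ?_
        · intro y hy
          exact (Finset.mem_filter.mp hy).2
        · intro s hs
          refine Finset.mem_filter.mpr ⟨Finset.mem_univ _, ?_⟩
          rw [sub_sub_cancel]
          exact hs
        · intro y _; exact sub_sub_cancel x y
        · intro s _; exact sub_sub_cancel x s
        · intro y _
          congr 2
          rw [sub_sub_cancel]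
    _ = ∑ s ∈ S, chi n (k * x) * chi n (-(k * s)) := by
        refine Finset.sum_congr rfl fun s _ => ?_
        rw [← chi_add]
        congr 1; ring
    _ = lam n S k * chi n (k * x) := by
        rw [← Finset.mul_sum, lam_def, mul_comm]

lemma transU_symm (hS : ∀ s ∈ S, -s ∈ S) (t : ℝ) :
    (transU (cayA n S) t)ᵀ = transU (cayA n S) t := by
  rw [transU, ← Matrix.exp_transpose]
  congr 1
  rw [Matrix.transpose_smul, ← Matrix.transpose_map, cay_symm n S hS]

lemma transU_eigen (t : ℝ) (k : ZMod n) :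
    (transU (cayA n S) t) *ᵥ (fun j => chi n (k * j))
      = Complex.exp (Complex.I * t * lam n S k) • fun j => chi n (k * j) := by
  rw [transU]
  refine exp_mulVec _ _ _ ?_
  rw [Matrix.smul_mulVec, cay_eigen n S k, smul_smul]

end PGSTaux


open PGSTaux in
/-- in an even circulant graph, plus PGST from a non-antipodal plus state
`(e_a+e_b)/√2` can only go to `(e_{a+n/2}+e_{b+n/2})/√2`. -/
theorem plus_pgst_nonantipodal_target (n : ℕ) [NeZero n] (heven : Even n)
    (S : Finset (ZMod n)) (h0 : (0 : ZMod n) ∉ S) (hS : ∀ s ∈ S, -s ∈ S)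
    (a b c d : ZMod n) (hab : a ≠ b) (hnanti : a - b ≠ ((n / 2 : ℕ) : ZMod n))
    (hcd : c ≠ d)
    (hli : LinearIndependent ℂ ![plusState a b, plusState c d])
    (hpgst : PGST (cayA n S) (plusState a b) (plusState c d)) :
    eVec c + eVec d = eVec (a + ((n / 2 : ℕ) : ZMod n)) + eVec (b + ((n / 2 : ℕ) : ZMod n)) := by
  classical
  obtain ⟨t, γ, hγ, htend⟩ := hpgst
  have hγne : γ ≠ 0 := by
    intro h; rw [h] at hγ; simp at hγ
  have hsqrt : ((Real.sqrt 2 : ℝ) : ℂ) ≠ 0 := by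
    simp only [ne_eq, Complex.ofReal_eq_zero]
    positivity
  set c0 : ℂ := ((Real.sqrt 2 : ℂ))⁻¹ with hc0def
  have hc0ne : c0 ≠ 0 := inv_ne_zero hsqrt
  -- dot products of character vectors with plus states
  have hdot : ∀ (k x y : ZMod n),
      (fun j => chi n (k * j)) ⬝ᵥ plusState x y
        = c0 * (chi n (k * x) + chi n (k * y)) := by
    intro k x y
    have h1 : ∀ j, (chi n (k * j)) * (plusState x y j)
        = c0 * ((if j = x then chi n (k * j) else 0)
            + (if j = y then chi n (k * j) else 0)) := by
      intro j
      simp only [plusState, Pi.smul_apply, Pi.add_apply, eVec, smul_eq_mul]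
      split_ifs <;> ring
    show (∑ j, chi n (k * j) * plusState x y j) = _
    calc (∑ j, chi n (k * j) * plusState x y j)
        = ∑ j, c0 * ((if j = x then chi n (k * j) else 0)
            + (if j = y then chi n (k * j) else 0)) := Finset.sum_congr rfl fun j _ => h1 j
      _ = c0 * ((∑ j, if j = x then chi n (k * j) else 0)
            + ∑ j, if j = y then chi n (k * j) else 0) := by
          rw [← Finset.mul_sum, Finset.sum_add_distrib]
      _ = c0 * (chi n (k * x) + chi n (k * y)) := by
          rw [Finset.sum_ite_eq' Finset.univ x, Finset.sum_ite_eq' Finset.univ y]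
          simp
  have hcont : ∀ k : ZMod n,
      Continuous (fun x : ZMod n → ℂ => (fun j => chi n (k * j)) ⬝ᵥ x) := by
    intro k
    have h1 : (fun x : ZMod n → ℂ => (fun j => chi n (k * j)) ⬝ᵥ x)
        = fun x => ∑ j, chi n (k * j) * x j := rfl
    rw [h1]
    exact continuous_finset_sum _ fun j _ => continuous_const.mul (continuous_apply j)
  -- the key limit, for every character
  have key : ∀ k : ZMod n,
      Tendsto (fun i => Complex.exp (Complex.I * (t i) * lam n S k)
          * (c0 * (chi n (k * a) + chi n (k * b))))
        atTop (nhds (γ * (c0 * (chi n (k * c) + chi n (k * d))))) := by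
    intro k
    have h1 := ((hcont k).tendsto (γ • plusState c d)).comp htend
    have h2 : ∀ i : ℕ,
        (fun j => chi n (k * j)) ⬝ᵥ ((transU (cayA n S) (t i)) *ᵥ plusState a b)
          = Complex.exp (Complex.I * (t i) * lam n S k)
              * (c0 * (chi n (k * a) + chi n (k * b))) := by
      intro i
      rw [Matrix.dotProduct_mulVec]
      have h3 : (fun j => chi n (k * j)) ᵥ* (transU (cayA n S) (t i))
          = (transU (cayA n S) (t i)) *ᵥ (fun j => chi n (k * j)) := by
        conv_lhs => rw [← transU_symm n S hS (t i)]
        rw [Matrix.vecMul_transpose]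
      rw [h3, transU_eigen n S (t i) k, smul_dotProduct, smul_eq_mul, hdot]
    have h4 : (fun j => chi n (k * j)) ⬝ᵥ (γ • plusState c d)
        = γ * (c0 * (chi n (k * c) + chi n (k * d))) := by
      rw [dotProduct_smul, smul_eq_mul, hdot]
    rw [← h4]
    exact h1.congr h2
  -- the exponential factors have modulus one
  have hmodulus : ∀ (k : ZMod n) (s : ℝ),
      ‖Complex.exp (Complex.I * s * lam n S k)‖ = 1 := by
    intro k s
    have hre : ((lam n S k).re : ℂ) = lam n S k :=
      Complex.conj_eq_iff_re.mp (lam_conj n S hS k)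
    rw [Complex.norm_exp, ← hre]
    have hz : (Complex.I * s * ((lam n S k).re : ℂ)).re = 0 := by
      simp [Complex.mul_re, Complex.mul_im]
    rw [hz, Real.exp_zero]
  -- step (i): the norms agree
  have hnorm : ∀ k : ZMod n,
      ‖chi n (k * a) + chi n (k * b)‖ = ‖chi n (k * c) + chi n (k * d)‖ := by
    intro k
    have h2 := (key k).norm
    have h3 : (fun i => ‖Complex.exp (Complex.I * (t i) * lam n S k)
        * (c0 * (chi n (k * a) + chi n (k * b)))‖)
        = fun _ => ‖c0 * (chi n (k * a) + chi n (k * b))‖ := by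
      funext i
      rw [norm_mul, hmodulus, one_mul]
    rw [h3] at h2
    have h4 := tendsto_nhds_unique h2 tendsto_const_nhds
    rw [norm_mul, norm_mul, norm_mul, hγ, one_mul] at h4
    exact (mul_left_cancel₀ (norm_ne_zero_iff.mpr hc0ne) h4).symm
  -- step (ii): rigidity of the cosine sequence
  have hE : ∀ k : ZMod n,
      chi n (k * (a - b)) + chi n (k * (b - a))
        = chi n (k * (c - d)) + chi n (k * (d - c)) := by
    intro k
    have hexp : ∀ x y : ZMod n,
        (chi n (k * x) + chi n (k * y))
          * ((starRingEnd ℂ) (chi n (k * x) + chi n (k * y)))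
        = 2 + chi n (k * (x - y)) + chi n (k * (y - x)) := by
      intro x y
      rw [map_add, chi_conj, chi_conj]
      have e1 := chi_mul_neg n (k * x)
      have e2 := chi_mul_neg n (k * y)
      have e3 : chi n (k * x) * chi n (-(k * y)) = chi n (k * (x - y)) := by
        rw [← chi_add]; congr 1; ring
      have e4 : chi n (k * y) * chi n (-(k * x)) = chi n (k * (y - x)) := by
        rw [← chi_add]; congr 1; ring
      linear_combination e1 + e2 + e3 + e4
    have h5 : (chi n (k * a) + chi n (k * b))
        * ((starRingEnd ℂ) (chi n (k * a) + chi n (k * b)))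
        = (chi n (k * c) + chi n (k * d))
        * ((starRingEnd ℂ) (chi n (k * c) + chi n (k * d))) := by
      rw [Complex.mul_conj, Complex.mul_conj]
      norm_cast
      rw [Complex.normSq_eq_norm_sq, Complex.normSq_eq_norm_sq, hnorm k]
    rw [hexp, hexp] at h5
    linear_combination h5
  have hδδ : (a - b) + (a - b) ≠ 0 := by
    intro h
    rcases two_tor n heven _ h with h0 | hh
    · exact hab (sub_eq_zero.mp h0)
    · exact hnanti hh
  have hba : (b - a) + (b - a) ≠ 0 := by
    intro h
    apply hδδ
    have h1 : (a - b) + (a - b) = -((b - a) + (b - a)) := by ring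
    rw [h1, h, neg_zero]
  -- Fourier inversion: the difference c - d is ±(a - b)
  have hL : ∀ k : ZMod n,
      (chi n (k * (a - b)) + chi n (k * (b - a))) * chi n (k * (b - a))
        = chi n (k * 0) + chi n (k * ((b - a) + (b - a))) := by
    intro k
    have t1 : k * (a - b) + k * (b - a) = k * 0 := by ring
    have t2 : k * (b - a) + k * (b - a) = k * ((b - a) + (b - a)) := by ring
    rw [add_mul, ← chi_add, ← chi_add, t1, t2]
  have hR : ∀ k : ZMod n,
      (chi n (k * (c - d)) + chi n (k * (d - c))) * chi n (k * (b - a))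
        = chi n (k * ((c - d) + (b - a))) + chi n (k * ((d - c) + (b - a))) := by
    intro k
    have t1 : k * (c - d) + k * (b - a) = k * ((c - d) + (b - a)) := by ring
    have t2 : k * (d - c) + k * (b - a) = k * ((d - c) + (b - a)) := by ring
    rw [add_mul, ← chi_add, ← chi_add, t1, t2]
  have hbig : (∑ k : ZMod n, (chi n (k * 0) + chi n (k * ((b - a) + (b - a)))))
      = ∑ k : ZMod n, (chi n (k * ((c - d) + (b - a))) + chi n (k * ((d - c) + (b - a)))) := by
    refine Finset.sum_congr rfl fun k _ => ?_
    rw [← hL k, ← hR k, hE k]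
  rw [Finset.sum_add_distrib, Finset.sum_add_distrib, sum_chi, sum_chi, sum_chi, sum_chi,
    if_pos rfl, if_neg hba] at hbig
  -- nonvanishing of the character sums at k = ±1
  have hF1 : chi n a + chi n b ≠ 0 := by
    intro h
    have ha' : chi n a = - chi n b := eq_neg_of_add_eq_zero_left h
    have h7 : chi n (a - b) = -1 := by
      have hsplit : chi n (a - b) = chi n a * chi n (-b) := by
        rw [← chi_add]; congr 1; ring
      rw [hsplit, ha', neg_mul, chi_mul_neg]
    have h8 : chi n ((a - b) + (a - b)) = 1 := by
      rw [chi_add, h7]; ring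
    exact hδδ ((chi_eq_one_iff n).mp h8)
  have hFm1 : chi n (-a) + chi n (-b) ≠ 0 := by
    intro h
    apply hF1
    have h9 : (starRingEnd ℂ) (chi n (-a) + chi n (-b)) = 0 := by
      rw [h, map_zero]
    rw [map_add, chi_conj, chi_conj, neg_neg, neg_neg] at h9
    exact h9
  -- limits at k = 1 and k = -1 agree since the eigenvalues do
  have key1 := key 1
  have keym1 := key (-1)
  simp only [one_mul] at key1
  simp only [neg_one_mul, lam_neg n S hS] at keym1
  set F1 := chi n a + chi n b with hF1def
  set Fm1 := chi n (-a) + chi n (-b) with hFm1def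
  set G1 := chi n c + chi n d with hG1def
  set Gm1 := chi n (-c) + chi n (-d) with hGm1def
  have hC1 : c0 * F1 ≠ 0 := mul_ne_zero hc0ne hF1
  have hC2 : c0 * Fm1 ≠ 0 := mul_ne_zero hc0ne hFm1
  have e1 : Tendsto (fun i => Complex.exp (Complex.I * (t i) * lam n S 1)) atTop
      (nhds (γ * (c0 * G1) / (c0 * F1))) := by
    have h10 := key1.div_const (c0 * F1)
    have h11 : (fun i => Complex.exp (Complex.I * (t i) * lam n S 1) * (c0 * F1) / (c0 * F1))
        = fun i => Complex.exp (Complex.I * (t i) * lam n S 1) := by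
      funext i
      exact mul_div_cancel_right₀ _ hC1
    rwa [h11] at h10
  have e2 : Tendsto (fun i => Complex.exp (Complex.I * (t i) * lam n S 1)) atTop
      (nhds (γ * (c0 * Gm1) / (c0 * Fm1))) := by
    have h10 := keym1.div_const (c0 * Fm1)
    have h11 : (fun i => Complex.exp (Complex.I * (t i) * lam n S 1) * (c0 * Fm1) / (c0 * Fm1))
        = fun i => Complex.exp (Complex.I * (t i) * lam n S 1) := by
      funext i
      exact mul_div_cancel_right₀ _ hC2
    rwa [h11] at h10
  have heq := tendsto_nhds_unique e1 e2
  rw [div_eq_div_iff hC1 hC2] at heq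
  have hmain : G1 * Fm1 = Gm1 * F1 := by
    have h12 : (γ * c0 * c0) * (G1 * Fm1) = (γ * c0 * c0) * (Gm1 * F1) := by
      linear_combination heq
    exact mul_left_cancel₀ (mul_ne_zero (mul_ne_zero hγne hc0ne) hc0ne) h12
  -- case analysis coming from Fourier inversion
  by_cases hcase : (c - d) + (b - a) = 0
  · -- here c - d = a - b
    have hεδ : c - d = a - b := by linear_combination hcase
    obtain ⟨p, hp⟩ : ∃ p, c = a + p := ⟨c - a, by ring⟩
    have hd' : d = b + p := by linear_combination hp - hεδ
    have hG1' : G1 = chi n p * F1 := by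
      rw [hG1def, hF1def, hp, hd', chi_add, chi_add]
      ring
    have hGm1' : Gm1 = chi n (-p) * Fm1 := by
      have t1 : -(a + p) = -a + -p := by ring
      have t2 : -(b + p) = -b + -p := by ring
      rw [hGm1def, hFm1def, hp, hd', t1, t2, chi_add, chi_add]
      ring
    have hpp : chi n p = chi n (-p) := by
      have h13 : (chi n p - chi n (-p)) * (F1 * Fm1) = 0 := by
        rw [hG1', hGm1'] at hmain
        linear_combination hmain
      rcases mul_eq_zero.mp h13 with h14 | h14
      · exact sub_eq_zero.mp h14
      · exact absurd h14 (mul_ne_zero hF1 hFm1)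
    have h2p : p + p = 0 := by
      apply (chi_eq_one_iff n).mp
      rw [chi_add]
      nth_rewrite 2 [hpp]
      exact chi_mul_neg n p
    rcases two_tor n heven p h2p with hp0 | hphalf
    · exfalso
      have hca : c = a := by rw [hp, hp0, add_zero]
      have hdb : d = b := by rw [hd', hp0, add_zero]
      have heqstate : plusState c d = plusState a b := by rw [hca, hdb]
      have h01 : (![plusState a b, plusState c d] : Fin 2 → (ZMod n → ℂ)) 0
          = ![plusState a b, plusState c d] 1 := by
        simp [heqstate]
      have h02 := hli.injective h01
      exact absurd h02 (by decide)
    · rw [hp, hd', hphalf]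
  · by_cases hcase2 : (d - c) + (b - a) = 0
    · -- here d - c = a - b
      have hεδ' : d - c = a - b := by linear_combination hcase2
      obtain ⟨q, hq⟩ : ∃ q, d = a + q := ⟨d - a, by ring⟩
      have hc' : c = b + q := by linear_combination hq - hεδ'
      have hG1' : G1 = chi n q * F1 := by
        rw [hG1def, hF1def, hq, hc', chi_add, chi_add]
        ring
      have hGm1' : Gm1 = chi n (-q) * Fm1 := by
        have t1 : -(a + q) = -a + -q := by ring
        have t2 : -(b + q) = -b + -q := by ring
        rw [hGm1def, hFm1def, hq, hc', t1, t2, chi_add, chi_add]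
        ring
      have hqq : chi n q = chi n (-q) := by
        have h13 : (chi n q - chi n (-q)) * (F1 * Fm1) = 0 := by
          rw [hG1', hGm1'] at hmain
          linear_combination hmain
        rcases mul_eq_zero.mp h13 with h14 | h14
        · exact sub_eq_zero.mp h14
        · exact absurd h14 (mul_ne_zero hF1 hFm1)
      have h2q : q + q = 0 := by
        apply (chi_eq_one_iff n).mp
        rw [chi_add]
        nth_rewrite 2 [hqq]
        exact chi_mul_neg n q
      rcases two_tor n heven q h2q with hq0 | hqhalf
      · exfalso
        have hca : c = b := by rw [hc', hq0, add_zero]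
        have hdb : d = a := by rw [hq, hq0, add_zero]
        have heqstate : plusState c d = plusState a b := by
          rw [hca, hdb]
          unfold plusState
          rw [add_comm (eVec b) (eVec a)]
        have h01 : (![plusState a b, plusState c d] : Fin 2 → (ZMod n → ℂ)) 0
            = ![plusState a b, plusState c d] 1 := by
          simp [heqstate]
        have h02 := hli.injective h01
        exact absurd h02 (by decide)
      · rw [hc', hq, hqhalf, add_comm]
    · exfalso
      rw [if_neg hcase, if_neg hcase2] at hbig
      simp only [add_zero, zero_add] at hbig
      exact Nat.cast_ne_zero.mpr (NeZero.ne n) hbig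
end

section
/- Let n be an even positive integer, let S ⊆ (ℤ/nℤ) \ {0} satisfy S = −S, and let a, b ∈ ℤ/nℤ be antipodal vertices, i.e. a − b = n/2 in ℤ/nℤ. If the circulant graph Cay(ℤ/nℤ, S) exhibits pretty good plus state transfer from (e_a + e_b)/√2 to some linearly independent plus state (e_c + e_d)/√2 with respect to its adjacency matrix, then 4 divides n and e_c + e_d = e_{a + n/4} + e_{b + n/4}; in particular pretty good state transfer occurs between (e_a + e_b)/√2 and (e_{a+n/4} + e_{b+n/4})/√2. -/
open Matrix Filter

set_option linter.unusedSectionVars false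

section Aux

variable {ι : Type*} [Fintype ι] [DecidableEq ι]

lemma permMat_comm (σ : Equiv.Perm ι) (M : Matrix ι ι ℝ)
    (hM : ∀ i j, M (σ i) (σ j) = M i j) :
    permMat σ * M = M * permMat σ := by
  ext i j
  simp only [Matrix.mul_apply, permMat, Matrix.of_apply, ite_mul, one_mul, zero_mul,
    mul_ite, mul_one, mul_zero]
  rw [Finset.sum_eq_single (σ.symm i) (fun k _ hk => if_neg (by
      intro h; exact hk (by rw [← h, Equiv.symm_apply_apply])))
    (fun h => absurd (Finset.mem_univ _) h),
    Finset.sum_eq_single (σ j) (fun k _ hk => if_neg (fun h => hk h.symm))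
    (fun h => absurd (Finset.mem_univ _) h)]
  simp only [Equiv.apply_symm_apply, if_pos rfl]
  rw [← hM (σ.symm i) j, Equiv.apply_symm_apply]

lemma transU_comm_perm (M : Matrix ι ι ℝ) (σ : Equiv.Perm ι)
    (hM : ∀ i j, M (σ i) (σ j) = M i j) (t : ℝ) :
    (permMat σ).map Complex.ofReal * transU M t
      = transU M t * (permMat σ).map Complex.ofReal := by
  have hPM : (permMat σ).map Complex.ofReal * M.map Complex.ofReal
      = M.map Complex.ofReal * (permMat σ).map Complex.ofReal := by
    have := permMat_comm σ M hM
    have h1 := congrArg (fun N : Matrix ι ι ℝ => N.map (Complex.ofRealHom : ℝ →+* ℂ)) this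
    simp only [Matrix.map_mul] at h1; exact h1
  have hc : Commute ((permMat σ).map Complex.ofReal)
      ((Complex.I * (t : ℂ)) • M.map Complex.ofReal) :=
    Commute.smul_right hPM _
  exact (hc.exp_right)

lemma continuous_mulVec (M : Matrix ι ι ℂ) : Continuous fun v : ι → ℂ => M *ᵥ v := by
  refine continuous_pi fun i => ?_
  simp only [Matrix.mulVec, dotProduct]
  exact continuous_finset_sum _ fun j _ => continuous_const.mul (continuous_apply j)

lemma fixed_of_pgst (M : Matrix ι ι ℝ) (σ : Equiv.Perm ι)
    (hM : ∀ i j, M (σ i) (σ j) = M i j) {u v : ι → ℂ}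
    (hu : (permMat σ).map Complex.ofReal *ᵥ u = u)
    (h : PGST M u v) :
    (permMat σ).map Complex.ofReal *ᵥ v = v := by
  obtain ⟨t, γ, hγ, hlim⟩ := h
  set P := (permMat σ).map Complex.ofReal with hP
  have hcomm : ∀ k, P *ᵥ ((transU M (t k)) *ᵥ u) = (transU M (t k)) *ᵥ u := by
    intro k
    rw [Matrix.mulVec_mulVec, transU_comm_perm M σ hM, ← Matrix.mulVec_mulVec, hu]
  have h2 : Tendsto (fun k => P *ᵥ ((transU M (t k)) *ᵥ u)) atTop (nhds (P *ᵥ (γ • v))) :=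
    ((continuous_mulVec P).tendsto _).comp hlim
  rw [show (fun k => P *ᵥ ((transU M (t k)) *ᵥ u)) = fun k => (transU M (t k)) *ᵥ u from
    funext hcomm] at h2
  have h3 : P *ᵥ (γ • v) = γ • v := tendsto_nhds_unique h2 hlim
  rw [Matrix.mulVec_smul] at h3
  have hγ0 : γ ≠ 0 := by intro h0; rw [h0] at hγ; simp at hγ
  exact smul_right_injective (ι → ℂ) hγ0 h3

lemma permMat_mulVec (σ : Equiv.Perm ι) (x : ι) :
    (permMat σ).map Complex.ofReal *ᵥ eVec x = eVec (σ x) := by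
  funext i
  simp only [Matrix.mulVec, dotProduct, permMat, Matrix.map_apply, Matrix.of_apply,
    eVec, apply_ite Complex.ofReal, Complex.ofReal_one, Complex.ofReal_zero,
    ite_mul, one_mul, zero_mul, mul_ite, mul_one, mul_zero]
  rw [Finset.sum_eq_single x (fun k _ hk => by simp [hk])
    (fun h => absurd (Finset.mem_univ _) h)]
  simp [eq_comm]

lemma permMat_mulVec_plus (σ : Equiv.Perm ι) (x y : ι) :
    (permMat σ).map Complex.ofReal *ᵥ plusState x y = plusState (σ x) (σ y) := by
  simp only [plusState, Matrix.mulVec_smul, Matrix.mulVec_add, permMat_mulVec]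

lemma sqrt2inv_ne : ((Real.sqrt 2 : ℂ))⁻¹ ≠ 0 := by
  simp [Real.sqrt_eq_zero']

lemma plus_eq_of_state_eq {x y x' y' : ι} (h : plusState x y = plusState x' y') :
    eVec x + eVec y = (eVec x' + eVec y' : ι → ℂ) :=
  smul_right_injective (ι → ℂ) sqrt2inv_ne h

lemma eVec_mem {x y x' y' : ι} (hxy : x ≠ y)
    (h : eVec x + eVec y = (eVec x' + eVec y' : ι → ℂ)) : x = x' ∨ x = y' := by
  by_contra hc
  push_neg at hc
  have := congrFun h x
  simp only [Pi.add_apply, eVec, if_pos rfl, if_neg hxy, if_neg hc.1, if_neg hc.2] at this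
  norm_num at this

end Aux

lemma zmod_cast_val {n : ℕ} [NeZero n] (x : ZMod n) : ((x.val : ℕ) : ZMod n) = x :=
  (ZMod.natCast_val x).trans (ZMod.cast_id n x)

lemma two_eq_zero {n : ℕ} [NeZero n] (hn : n % 2 = 0) {x : ZMod n} (hx : x + x = 0) :
    x = 0 ∨ x = ((n / 2 : ℕ) : ZMod n) := by
  have h1 : ((x.val + x.val : ℕ) : ZMod n) = ((0 : ℕ) : ZMod n) := by
    rw [Nat.cast_add, zmod_cast_val, hx, Nat.cast_zero]
  rw [ZMod.natCast_eq_natCast_iff] at h1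
  have h2 : (x.val + x.val) % n = 0 := by
    simpa [Nat.ModEq] using h1
  have hlt : x.val < n := ZMod.val_lt x
  have hpos : 0 < n := Nat.pos_of_ne_zero (NeZero.ne n)
  have key := Nat.div_add_mod (x.val + x.val) n
  have hqlt : (x.val + x.val) / n < 2 := Nat.div_lt_of_lt_mul (by omega)
  interval_cases hq : ((x.val + x.val) / n)
  · left
    have : x.val = 0 := by omega
    rw [← zmod_cast_val x, this, Nat.cast_zero]
  · right
    have : x.val = n / 2 := by omega
    rw [← zmod_cast_val x, this]

lemma two_eq_half {n : ℕ} [NeZero n] (hn : n % 2 = 0) {x : ZMod n}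
    (hx : x + x = ((n / 2 : ℕ) : ZMod n)) :
    n % 4 = 0 ∧ (x = ((n / 4 : ℕ) : ZMod n) ∨
      x = ((n / 4 : ℕ) : ZMod n) + ((n / 2 : ℕ) : ZMod n)) := by
  have h1 : ((x.val + x.val : ℕ) : ZMod n) = ((n / 2 : ℕ) : ZMod n) := by
    rw [Nat.cast_add, zmod_cast_val, hx]
  rw [ZMod.natCast_eq_natCast_iff] at h1
  have hpos : 0 < n := Nat.pos_of_ne_zero (NeZero.ne n)
  have h2 : (x.val + x.val) % n = n / 2 := by
    have h1' : (x.val + x.val) % n = (n / 2) % n := h1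
    exact h1'.trans (Nat.mod_eq_of_lt (by omega))
  have hlt : x.val < n := ZMod.val_lt x
  have key := Nat.div_add_mod (x.val + x.val) n
  have hqlt : (x.val + x.val) / n < 2 := Nat.div_lt_of_lt_mul (by omega)
  interval_cases hq : ((x.val + x.val) / n)
  · refine ⟨by omega, Or.inl ?_⟩
    have : x.val = n / 4 := by omega
    rw [← zmod_cast_val x, this]
  · refine ⟨by omega, Or.inr ?_⟩
    have : x.val = n / 4 + n / 2 := by omega
    rw [← zmod_cast_val x, this, Nat.cast_add]

lemma plusState_comm {ι : Type*} [DecidableEq ι] (x y : ι) :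
    plusState x y = plusState y x := by
  simp [plusState, add_comm]


/-- in an even circulant graph, plus PGST from an antipodal plus state forces
`4 ∣ n` and the target to be `(e_{a+n/4}+e_{b+n/4})/√2`. -/
theorem plus_pgst_antipodal_target (n : ℕ) [NeZero n] (heven : Even n)
    (S : Finset (ZMod n)) (h0 : (0 : ZMod n) ∉ S) (hS : ∀ s ∈ S, -s ∈ S)
    (a b c d : ZMod n) (hab : a ≠ b) (hanti : a - b = ((n / 2 : ℕ) : ZMod n))
    (hcd : c ≠ d)
    (hli : LinearIndependent ℂ ![plusState a b, plusState c d])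
    (hpgst : PGST (cayA n S) (plusState a b) (plusState c d)) :
    4 ∣ n ∧
    eVec c + eVec d = eVec (a + ((n / 4 : ℕ) : ZMod n)) + eVec (b + ((n / 4 : ℕ) : ZMod n)) ∧
    PGST (cayA n S) (plusState a b)
      (plusState (a + ((n / 4 : ℕ) : ZMod n)) (b + ((n / 4 : ℕ) : ZMod n))) := by
  classical
  have hn2 : n % 2 = 0 := Nat.even_iff.mp heven
  have hpos : 0 < n := Nat.pos_of_ne_zero (NeZero.ne n)
  set hh : ZMod n := ((n / 2 : ℕ) : ZMod n) with hh_def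
  have hhh : hh + hh = 0 := by
    rw [hh_def, ← Nat.cast_add, show n / 2 + n / 2 = n by omega, ZMod.natCast_self]
  have hne0 : hh ≠ 0 := by
    intro h0'
    apply hab
    have : a - b = 0 := by rw [hanti, h0']
    rwa [sub_eq_zero] at this
  have hb : b = a + hh := by
    have h1 : a = hh + b := sub_eq_iff_eq_add.mp hanti
    rw [h1, add_comm hh b, add_assoc, hhh, add_zero]
  have hSiff : ∀ z : ZMod n, -z ∈ S ↔ z ∈ S :=
    fun z => ⟨fun hz => by simpa using hS _ hz, fun hz => hS z hz⟩
  -- Symmetry 1 : translation by hh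
  have hM1 : ∀ i j : ZMod n,
      cayA n S ((Equiv.addRight hh) i) ((Equiv.addRight hh) j) = cayA n S i j := by
    intro i j
    simp only [Equiv.coe_addRight, cayA, Matrix.of_apply, add_sub_add_right_eq_sub]
  have hu1 : (permMat (Equiv.addRight hh)).map Complex.ofReal *ᵥ plusState a b
      = plusState a b := by
    rw [permMat_mulVec_plus]
    have e1 : (Equiv.addRight hh) a = b := by
      simp only [Equiv.coe_addRight]; exact hb.symm
    have e2 : (Equiv.addRight hh) b = a := by
      simp only [Equiv.coe_addRight]; rw [hb, add_assoc, hhh, add_zero]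
    rw [e1, e2, plusState_comm]
  have hfix1 := fixed_of_pgst (cayA n S) (Equiv.addRight hh) hM1 hu1 hpgst
  rw [permMat_mulVec_plus] at hfix1
  simp only [Equiv.coe_addRight] at hfix1
  have eq1 := plus_eq_of_state_eq hfix1
  have hd : d = c + hh := by
    rcases eVec_mem (fun he => hcd (add_right_cancel he)) eq1 with h' | h'
    · exact absurd (add_eq_left.mp h') hne0
    · exact h'.symm
  -- Symmetry 2 : reflection x ↦ (a+b) - x
  have hM2 : ∀ i j : ZMod n,
      cayA n S ((Equiv.subLeft (a + b)) i) ((Equiv.subLeft (a + b)) j) = cayA n S i j := by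
    intro i j
    have e : (a + b) - i - ((a + b) - j) = -(i - j) := by ring
    simp only [Equiv.subLeft_apply, cayA, Matrix.of_apply, e, hSiff]
  have hu2 : (permMat (Equiv.subLeft (a + b))).map Complex.ofReal *ᵥ plusState a b
      = plusState a b := by
    rw [permMat_mulVec_plus]
    have e1 : (Equiv.subLeft (a + b)) a = b := by
      simp only [Equiv.subLeft_apply, add_sub_cancel_left]
    have e2 : (Equiv.subLeft (a + b)) b = a := by
      simp only [Equiv.subLeft_apply, add_sub_cancel_right]
    rw [e1, e2, plusState_comm]
  have hfix2 := fixed_of_pgst (cayA n S) (Equiv.subLeft (a + b)) hM2 hu2 hpgst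
  rw [permMat_mulVec_plus] at hfix2
  simp only [Equiv.subLeft_apply] at hfix2
  have eq2 := plus_eq_of_state_eq hfix2
  have hmem := eVec_mem (fun he => hcd (by linear_combination -he)) eq2
  rcases hmem with hA | hB
  · -- a + b - c = c
    have hx : (c - a) + (c - a) = hh := by
      rw [hb] at hA
      linear_combination -hA
    obtain ⟨hn4, hxx⟩ := two_eq_half hn2 hx
    set q : ZMod n := ((n / 4 : ℕ) : ZMod n) with hq_def
    have hdvd : 4 ∣ n := Nat.dvd_of_mod_eq_zero hn4
    have heq : eVec c + eVec d = (eVec (a + q) + eVec (b + q) : ZMod n → ℂ) := by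
      rcases hxx with h1 | h1
      · have hc' : c = a + q := by linear_combination h1
        have hd' : d = b + q := by rw [hd, hc', hb]; ring
        rw [hc', hd']
      · have hc' : c = b + q := by rw [hb]; linear_combination h1
        have hd' : d = a + q := by rw [hd, hc', hb]; linear_combination hhh
        rw [hc', hd', add_comm (eVec (b + q)) (eVec (a + q))]
    refine ⟨hdvd, heq, ?_⟩
    have hps : plusState (a + q) (b + q) = plusState c d := by
      rw [plusState, plusState, heq]
    rw [hps]
    exact hpgst
  · -- a + b - c = d : leads to contradiction with linear independence
    exfalso
    have hx : (c - a) + (c - a) = 0 := by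
      rw [hb, hd] at hB
      linear_combination -hB
    rw [linearIndependent_fin2] at hli
    rcases two_eq_zero hn2 hx with h0' | h0'
    · have hc' : c = a := sub_eq_zero.mp h0'
      have hda : d = b := by rw [hd, hc', ← hb]
      exact hli.2 1 (by simp [hc', hda])
    · have hc' : c = b := by rw [hb]; linear_combination h0'
      have hda : d = a := by rw [hd, hc', hb, add_assoc, hhh, add_zero]
      exact hli.2 1 (by simp [hc', hda, plusState_comm b a])
end
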